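/- arXiv:1605.08592 — 4 statements merged into one kernel-verified Lean document; each statement's English description precedes it below -/
import Mathlib

section
/- Lemma 1.4. Let 𝕏→𝕏′=(X,𝒳′,μ,G)→𝕐 be a short factors series, let G′ be an R-submodule of the lcsc R-module G, and let Γ be a countable dense subgroup of G′. Let δ≥0, ε>0, φ∈L²(X,𝒳′,μ) and φ₁,…,φ_k∈L²(X,𝒳,μ) be such that for every γ∈Γ, min_{1≤i≤k}‖U_γφ−φ_i‖_{2,y}<ε for all y∈Y outside a set of ν-measure ≤δ. Then for every g∈G′, min_{1≤i≤k}‖U_gφ−φ_i‖_{2,y}<4ε for all y∈Y outside a set of ν-measure ≤4δ. Consequently L²_FKap(X,𝒳′,μ,G:G′)=L²_FKap(X,𝒳′,μ,G:Γ). -/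
open MeasureTheory Filter Set Topology
open scoped ENNReal

noncomputable section

namespace FE

variable {R G X Y : Type*}

/-- The disintegration `μ = ∫_Y μ_y dν(y)` of `μ` over an extension `π : X → Y`:
each `μ_y` is a probability measure on `X`, `y ↦ μ_y B` is measurable, and
`μ (B ∩ π⁻¹ A) = ∫_A μ_y B dν`, coding `μ_{π x} B = E_μ(1_B | π⁻¹[𝒴])(x)`. -/
structure Disintegration [mXa : MeasurableSpace X] [mYa : MeasurableSpace Y]
    (μ : Measure X) (ν : Measure Y) (π : X → Y)
    (μy : Y → Measure X) : Prop where
  prob : ∀ y, IsProbabilityMeasure (μy y)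
  meas : ∀ B : Set X, MeasurableSet B → Measurable fun y => μy y B
  eq : ∀ B : Set X, MeasurableSet B → ∀ A : Set Y, MeasurableSet A →
    μ (B ∩ π ⁻¹' A) = ∫⁻ y in A, μy y B ∂ν

/-- The relative product (condition-independent) measure `μ ⊗_Y μ = ∫_Y μ_y ⊗ μ_y dν`. -/
def relProd [mXa : MeasurableSpace X] [mYa : MeasurableSpace Y]
    (ν : Measure Y) (μy : Y → Measure X) : Measure (X × X) :=
  ν.bind fun y => (μy y).prod (μy y)

/-- The relative convolution `H *_Y φ (x) = ∫_X H(x,x') φ(x') dμ_{π x}(x')`. -/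
def relConv [mXa : MeasurableSpace X] (μy : Y → Measure X) (π : X → Y)
    (H : X × X → ℂ) (φ : X → ℂ) : X → ℂ :=
  fun x => ∫ x', H (x, x') * φ x' ∂(μy (π x))

/-- Membership in `L²(X, 𝒳', μ)` where `m'` is a sub-σ-algebra `𝒳'`. -/
def MemL2 (m' : MeasurableSpace X) [mXa : MeasurableSpace X] (μ : Measure X)
    (φ : X → ℂ) : Prop :=
  Measurable[m'] φ ∧ MemLp φ 2 μ

/-- Essential boundedness. -/
def BddAE {α : Type*} [MeasurableSpace α] (ρ : Measure α) (f : α → ℂ) : Prop :=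
  ∃ C : ℝ, ∀ᵐ a ∂ρ, ‖f a‖ ≤ C

/-- `φ` is FK almost periodic for `Γ`: for every `ε > 0` there are finitely many
`ψ₁, …, ψ_k ∈ L²(X, 𝒳, μ)` such that for every `g ∈ Γ`,
`min_j ‖U_g φ − ψ_j‖_{2,y} < ε` for ν-a.e. `y`. -/
def IsFKap [mXa : MeasurableSpace X] [mYa : MeasurableSpace Y] (act : G → X → X)
    (μ : Measure X) (ν : Measure Y) (μy : Y → Measure X)
    (Γ : Set G) (φ : X → ℂ) : Prop :=
  ∀ ε : ℝ, 0 < ε → ∃ (k : ℕ) (ψ : Fin k → X → ℂ),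
    (∀ j, MemLp (ψ j) 2 μ) ∧
    ∀ g ∈ Γ, ∀ᵐ y ∂ν,
      ∃ j, eLpNorm (fun x => φ (act g x) - ψ j x) 2 (μy y) < ENNReal.ofReal ε

/-- `φ` is FK ν-almost almost-periodic for `Γ`: for all `δ, ε > 0` there are finitely many
`ψ₁, …, ψ_k ∈ L²(X, 𝒳, μ)` such that for every `g ∈ Γ`,
`min_j ‖U_g φ − ψ_j‖_{2,y} < ε` outside a set of `y` of ν-measure less than `δ`. -/
def IsFKaap [mXa : MeasurableSpace X] [mYa : MeasurableSpace Y] (act : G → X → X)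
    (μ : Measure X) (ν : Measure Y) (μy : Y → Measure X)
    (Γ : Set G) (φ : X → ℂ) : Prop :=
  ∀ δ ε : ℝ, 0 < δ → 0 < ε → ∃ (k : ℕ) (ψ : Fin k → X → ℂ),
    (∀ j, MemLp (ψ j) 2 μ) ∧
    ∀ g ∈ Γ,
      ν {y | ¬ ∃ j, eLpNorm (fun x => φ (act g x) - ψ j x) 2 (μy y) < ENNReal.ofReal ε}
        < ENNReal.ofReal δ

/-- The extension `π : 𝕏' → 𝕐` is relatively compact for `Γ`:
the FK a.p. (for `Γ`) functions are dense in `L²(X, 𝒳', μ)`. -/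
def RelCompact (m' : MeasurableSpace X) [mXa : MeasurableSpace X] [mYa : MeasurableSpace Y]
    (act : G → X → X) (μ : Measure X) (ν : Measure Y) (μy : Y → Measure X)
    (Γ : Set G) : Prop :=
  ∀ φ : X → ℂ, MemL2 m' μ φ → ∀ ε : ℝ, 0 < ε →
    ∃ ψ : X → ℂ, MemL2 m' μ ψ ∧ IsFKap act μ ν μy Γ ψ ∧
      eLpNorm (fun x => φ x - ψ x) 2 μ < ENNReal.ofReal ε

/-- `H` is invariant (a.e. with respect to `ρ`) for the diagonal `Γ`-action on `X × X`. -/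
def DiagInvariant [mXa : MeasurableSpace X] (act : G → X → X) (ρ : Measure (X × X)) (Γ : Set G)
    (H : X × X → ℂ) : Prop :=
  ∀ g ∈ Γ, (fun p : X × X => H (act g p.1, act g p.2)) =ᵐ[ρ] H

/-- The extension `π : 𝕏' → 𝕐` is jointly relatively weak-mixing for `Γ`:
every `Γ`-invariant `H ∈ L²(X×X, 𝒳'⊗𝒳', μ⊗_Yμ)` is a.e. a function on `𝕐`
via `π ×_Y π`. -/
def JointRelWM (m' : MeasurableSpace X) [mXa : MeasurableSpace X] [mYa : MeasurableSpace Y]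
    (act : G → X → X) (ν : Measure Y) (μy : Y → Measure X) (π : X → Y)
    (Γ : Set G) : Prop :=
  ∀ H : X × X → ℂ, Measurable[m'.prod m'] H → MemLp H 2 (relProd ν μy) →
    DiagInvariant act (relProd ν μy) Γ H →
    ∃ h : Y → ℂ, Measurable h ∧ H =ᵐ[relProd ν μy] fun p => h (π p.1)

/-- The extension of `𝕐` with σ-algebra `m'` on `X` is nontrivial:
`π⁻¹[𝒴] ≠ m'` (μ-mod 0). -/
def NontrivialExt (m' : MeasurableSpace X) [mXa : MeasurableSpace X] [mYa : MeasurableSpace Y]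
    (μ : Measure X) (π : X → Y) : Prop :=
  ∃ A : Set X, MeasurableSet[m'] A ∧
    ∀ B : Set Y, MeasurableSet B → μ (symmDiff A (π ⁻¹' B)) ≠ 0

/-- The extension `π : 𝕏' → 𝕐` is jointly relatively ergodic for `Γ`: every
`Γ`-invariant `f ∈ L^∞(X, 𝒳', μ)` is μ-a.e. a function on `𝕐`. -/
def JointRelErg (m' : MeasurableSpace X) [mXa : MeasurableSpace X] [mYa : MeasurableSpace Y]
    (act : G → X → X) (μ : Measure X) (π : X → Y) (Γ : Set G) : Prop :=
  ∀ f : X → ℂ, Measurable[m'] f → MemLp f ⊤ μ →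
    (∀ g ∈ Γ, (fun x => f (act g x)) =ᵐ[μ] f) →
    ∃ h : Y → ℂ, Measurable h ∧ f =ᵐ[μ] fun x => h (π x)

/-- `Γ` is an `R`-submodule of the `R`-module `G` (with scalar action `σ`):
a subgroup closed under scalar multiplication. -/
def IsSubmoduleSet [Group G] (σ : R → G → G) (Γ : Set G) : Prop :=
  (1 : G) ∈ Γ ∧ (∀ a ∈ Γ, ∀ b ∈ Γ, a * b ∈ Γ) ∧ (∀ a ∈ Γ, a⁻¹ ∈ Γ) ∧
    ∀ t : R, ∀ a ∈ Γ, σ t a ∈ Γ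

/-- `G` is a Noetherian `R`-module: the ascending chain condition on `R`-submodules. -/
def NoetherianModule [Group G] (σ : R → G → G) : Prop :=
  ∀ c : ℕ → Set G, (∀ n, IsSubmoduleSet σ (c n)) → (∀ n, c n ⊆ c (n + 1)) →
    ∃ N, ∀ n, N ≤ n → c n = c N

/-- The ring `R` is syndetic: for every `r ≠ 0` the set `rR` is syndetic in `R`,
i.e. `K + rR = R` for some compact `K`. -/
def SyndeticRing (R : Type*) [Ring R] [TopologicalSpace R] : Prop :=
  ∀ r : R, r ≠ 0 → ∃ K : Set R, IsCompact K ∧ ∀ x : R, ∃ k ∈ K, ∃ s : R, x = k + r * s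

/-- The extension `π : 𝕏' → 𝕐` is totally relatively weak-mixing for `Γ`:
for every `g ∈ Γ` with `g ≠ I`, every `⟨g⟩_R`-invariant `H ∈ L²(μ⊗_Yμ)` is a.e.
a function on `𝕐`. -/
def TotallyRelWM (m' : MeasurableSpace X) [mXa : MeasurableSpace X] [mYa : MeasurableSpace Y]
    [Group G] (σ : R → G → G) (act : G → X → X) (ν : Measure Y)
    (μy : Y → Measure X) (π : X → Y) (Γ : Set G) : Prop :=
  ∀ g ∈ Γ, g ≠ (1 : G) →
    JointRelWM m' act ν μy π (Set.range fun t : R => σ t g)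

/-- The extension `π : (X, m', μ, G) → 𝕐` is primitive. -/
def PrimitiveExt (m' : MeasurableSpace X) [mXa : MeasurableSpace X] [mYa : MeasurableSpace Y]
    [Group G] (σ : R → G → G) (act : G → X → X) (μ : Measure X) (ν : Measure Y)
    (μy : Y → Measure X) (π : X → Y) : Prop :=
  TotallyRelWM m' σ act ν μy π Set.univ ∨
  RelCompact m' act μ ν μy Set.univ ∨
  ∃ Grc Grw : Set G, IsSubmoduleSet σ Grc ∧ IsSubmoduleSet σ Grw ∧
    Grc ≠ ({1} : Set G) ∧ Grw ≠ ({1} : Set G) ∧ Grc ∩ Grw = ({1} : Set G) ∧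
    (∀ g : G, ∃ a ∈ Grc, ∃ b ∈ Grw, g = a * b) ∧
    RelCompact m' act μ ν μy Grc ∧ TotallyRelWM m' σ act ν μy π Grw

/-- Condition C1: the relative convolutions `H *_Y φ`, with `H` bounded `Γ`-invariant
in `L²(μ⊗_Yμ)` and `φ` bounded in `L²(X,𝒳',μ)`, span a dense subspace of `L²(X,𝒳',μ)`. -/
def C1 (m' : MeasurableSpace X) [mXa : MeasurableSpace X] [mYa : MeasurableSpace Y]
    (act : G → X → X) (μ : Measure X) (ν : Measure Y) (μy : Y → Measure X)
    (π : X → Y) (Γ : Set G) : Prop :=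
  ∀ f : X → ℂ, MemL2 m' μ f → ∀ ε : ℝ, 0 < ε →
    ∃ (k : ℕ) (c : Fin k → ℂ) (H : Fin k → X × X → ℂ) (φ : Fin k → X → ℂ),
      (∀ i, Measurable[m'.prod m'] (H i) ∧ MemLp (H i) 2 (relProd ν μy) ∧
        BddAE (relProd ν μy) (H i) ∧ DiagInvariant act (relProd ν μy) Γ (H i)) ∧
      (∀ i, MemL2 m' μ (φ i) ∧ BddAE μ (φ i)) ∧
      eLpNorm (fun x => f x - ∑ i, c i * relConv μy π (H i) (φ i) x) 2 μ
        < ENNReal.ofReal ε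

/-- Condition C2: the FK a.p. (for `Γ`) functions are dense in `L²(X,𝒳',μ)`. -/
def C2 (m' : MeasurableSpace X) [mXa : MeasurableSpace X] [mYa : MeasurableSpace Y]
    (act : G → X → X) (μ : Measure X) (ν : Measure Y) (μy : Y → Measure X)
    (Γ : Set G) : Prop :=
  RelCompact m' act μ ν μy Γ

/-- Condition C3: every `φ ∈ L²(X,𝒳',μ)` admits, for each `δ > 0`, a set `B ∈ 𝒴` with
`ν(B) > 1 − δ` such that the modification `φ_B = 1_{π⁻¹[B]}·φ` is FK a.p. for `Γ`. -/
def C3 (m' : MeasurableSpace X) [mXa : MeasurableSpace X] [mYa : MeasurableSpace Y]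
    (act : G → X → X) (μ : Measure X) (ν : Measure Y) (μy : Y → Measure X)
    (π : X → Y) (Γ : Set G) : Prop :=
  ∀ φ : X → ℂ, MemL2 m' μ φ → ∀ δ : ℝ, 0 < δ →
    ∃ B : Set Y, MeasurableSet B ∧ 1 - δ < (ν B).toReal ∧
      IsFKap act μ ν μy Γ ((π ⁻¹' B).indicator φ)

/-- Condition C4: every `φ ∈ L²(X,𝒳',μ)` is FK ν-almost almost-periodic for `Γ`. -/
def C4 (m' : MeasurableSpace X) [mXa : MeasurableSpace X] [mYa : MeasurableSpace Y]
    (act : G → X → X) (μ : Measure X) (ν : Measure Y) (μy : Y → Measure X)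
    (Γ : Set G) : Prop :=
  ∀ φ : X → ℂ, MemL2 m' μ φ → IsFKaap act μ ν μy Γ φ

/-- A measure on `G` carried by `Γ` and left-invariant under elements of `Γ`
(a left Haar measure of `Γ`). -/
def LeftInvariantOn [Group G] [MeasurableSpace G] (mΓ : Measure G) (Γ : Set G) : Prop :=
  mΓ Γᶜ = 0 ∧
    ∀ g ∈ Γ, ∀ A : Set G, MeasurableSet A → mΓ ((fun h => g * h) ⁻¹' A) = mΓ A

/-- A weak Følner sequence in `Γ` for the measure `mΓ`. -/
def IsWeakFolner [Group G] [TopologicalSpace G] [MeasurableSpace G]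
    (mΓ : Measure G) (Γ : Set G) (F : ℕ → Set G) : Prop :=
  (∀ n, IsCompact (F n)) ∧ (∀ n, F n ⊆ Γ) ∧ (∀ n, 0 < mΓ (F n)) ∧ (∀ n, mΓ (F n) < ⊤) ∧
    ∀ g ∈ Γ, Tendsto (fun n => mΓ (symmDiff ((fun h => g * h) '' F n) (F n)) / mΓ (F n))
      atTop (nhds 0)

/-- The Følner average `(1/m_Γ(F_n)) ∫_{F_n} U_g (φ ⊗ φ̄) dg` as a function on `X × X`. -/
def FolnerAvg [MeasurableSpace G] (act : G → X → X) (mΓ : Measure G) (F : ℕ → Set G)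
    (φ : X → ℂ) (n : ℕ) : X × X → ℂ :=
  fun p => (mΓ (F n)).toReal⁻¹ •
    ∫ g in F n, φ (act g p.1) * (starRingEnd ℂ) (φ (act g p.2)) ∂mΓ

/-- Condition C5: for any weak Følner sequence in `Γ` and any `φ ∈ L²(X,𝒳',μ)`,
the weak `L²(μ⊗_Yμ)`-limit `P(φ⊗φ̄)` of the Følner averages vanishes iff `φ = 0`. -/
def C5 (m' : MeasurableSpace X) [mXa : MeasurableSpace X] [mYa : MeasurableSpace Y]
    [Group G] [TopologicalSpace G] [MeasurableSpace G]
    (act : G → X → X) (μ : Measure X) (ν : Measure Y) (μy : Y → Measure X)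
    (Γ : Set G) : Prop :=
  ∀ mΓ : Measure G, LeftInvariantOn mΓ Γ →
  ∀ F : ℕ → Set G, IsWeakFolner mΓ Γ F →
  ∀ φ : X → ℂ, MemL2 m' μ φ →
  ∀ P : X × X → ℂ, MemLp P 2 (relProd ν μy) →
    (∀ ψ : X × X → ℂ, MemLp ψ 2 (relProd ν μy) →
      Tendsto
        (fun n => ∫ p, FolnerAvg act mΓ F φ n p * (starRingEnd ℂ) (ψ p) ∂(relProd ν μy))
        atTop (nhds (∫ p, P p * (starRingEnd ℂ) (ψ p) ∂(relProd ν μy)))) →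
    (P =ᵐ[relProd ν μy] 0 ↔ φ =ᵐ[μ] 0)

/-- Condition C6: as C5 but with the limit taken in the `L²(μ⊗_Yμ)`-norm. -/
def C6 (m' : MeasurableSpace X) [mXa : MeasurableSpace X] [mYa : MeasurableSpace Y]
    [Group G] [TopologicalSpace G] [MeasurableSpace G]
    (act : G → X → X) (μ : Measure X) (ν : Measure Y) (μy : Y → Measure X)
    (Γ : Set G) : Prop :=
  ∀ mΓ : Measure G, LeftInvariantOn mΓ Γ →
  ∀ F : ℕ → Set G, IsWeakFolner mΓ Γ F →
  ∀ φ : X → ℂ, MemL2 m' μ φ →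
  ∀ P : X × X → ℂ, MemLp P 2 (relProd ν μy) →
    Tendsto (fun n => eLpNorm (fun p => FolnerAvg act mΓ F φ n p - P p) 2 (relProd ν μy))
      atTop (nhds 0) →
    (P =ᵐ[relProd ν μy] 0 ↔ φ =ᵐ[μ] 0)

/-- Disintegration of `μ` over a factor given by a sub-σ-algebra `m₁` of the ambient
σ-algebra, via conditional measures `μc x`. -/
structure CondDisint (m₁ : MeasurableSpace X) [mXa : MeasurableSpace X] (μ : Measure X)
    (μc : X → Measure X) : Prop where
  prob : ∀ x, IsProbabilityMeasure (μc x)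
  meas : ∀ B : Set X, MeasurableSet B → Measurable[m₁] fun x => μc x B
  eq : ∀ B : Set X, MeasurableSet B → ∀ A : Set X, MeasurableSet[m₁] A →
    μ (B ∩ A) = ∫⁻ x in A, μc x B ∂μ

/-- The relative product measure over a factor via conditional measures. -/
def relProdC [mXa : MeasurableSpace X] (μ : Measure X) (μc : X → Measure X) : Measure (X × X) :=
  μ.bind fun x => (μc x).prod (μc x)

/-- FK almost periodicity, fiber measures given by conditional measures. -/
def IsFKapC [mXa : MeasurableSpace X] (act : G → X → X) (μ : Measure X) (μc : X → Measure X)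
    (Γ : Set G) (φ : X → ℂ) : Prop :=
  ∀ ε : ℝ, 0 < ε → ∃ (k : ℕ) (ψ : Fin k → X → ℂ),
    (∀ j, MemLp (ψ j) 2 μ) ∧
    ∀ g ∈ Γ, ∀ᵐ x ∂μ,
      ∃ j, eLpNorm (fun z => φ (act g z) - ψ j z) 2 (μc x) < ENNReal.ofReal ε

/-- FK almost almost-periodicity, fiber measures given by conditional measures. -/
def IsFKaapC [mXa : MeasurableSpace X] (act : G → X → X) (μ : Measure X) (μc : X → Measure X)
    (Γ : Set G) (φ : X → ℂ) : Prop :=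
  ∀ δ ε : ℝ, 0 < δ → 0 < ε → ∃ (k : ℕ) (ψ : Fin k → X → ℂ),
    (∀ j, MemLp (ψ j) 2 μ) ∧
    ∀ g ∈ Γ,
      μ {x | ¬ ∃ j, eLpNorm (fun z => φ (act g z) - ψ j z) 2 (μc x) < ENNReal.ofReal ε}
        < ENNReal.ofReal δ

/-- Relative compactness of the extension `(X,m₂,μ,G) → (X,m₁,μ,G)` for `Γ`,
with conditional measures `μc` over the base `m₁`. -/
def RelCompactC (m₂ : MeasurableSpace X) [mXa : MeasurableSpace X]
    (act : G → X → X) (μ : Measure X) (μc : X → Measure X) (Γ : Set G) : Prop :=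
  ∀ φ : X → ℂ, MemL2 m₂ μ φ → ∀ ε : ℝ, 0 < ε →
    ∃ ψ : X → ℂ, MemL2 m₂ μ ψ ∧ IsFKapC act μ μc Γ ψ ∧
      eLpNorm (fun x => φ x - ψ x) 2 μ < ENNReal.ofReal ε

/-- Relative C4-compactness: every function of `L²(X,m₂,μ)` is FK a.a.p. for `Γ`
relative to the base factor (whose conditional measures are `μc`). -/
def RelC4CompactC (m₂ : MeasurableSpace X) [mXa : MeasurableSpace X]
    (act : G → X → X) (μ : Measure X) (μc : X → Measure X) (Γ : Set G) : Prop :=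
  ∀ φ : X → ℂ, MemL2 m₂ μ φ → IsFKaapC act μ μc Γ φ

/-- Joint relative weak-mixing of `(X,m₂,μ,G) → (X,m₁,μ,G)` for `Γ`. -/
def JointRelWMC (m₂ m₁ : MeasurableSpace X) [mXa : MeasurableSpace X]
    (act : G → X → X) (μ : Measure X) (μc : X → Measure X) (Γ : Set G) : Prop :=
  ∀ H : X × X → ℂ, Measurable[m₂.prod m₂] H → MemLp H 2 (relProdC μ μc) →
    DiagInvariant act (relProdC μ μc) Γ H →
    ∃ h : X → ℂ, Measurable[m₁] h ∧ H =ᵐ[relProdC μ μc] fun p => h p.1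

/-- Total relative weak-mixing of `(X,m₂,μ,G) → (X,m₁,μ,G)` for `Γ`. -/
def TotallyRelWMC (m₂ m₁ : MeasurableSpace X) [mXa : MeasurableSpace X] [Group G]
    (σ : R → G → G) (act : G → X → X) (μ : Measure X)
    (μc : X → Measure X) (Γ : Set G) : Prop :=
  ∀ g ∈ Γ, g ≠ (1 : G) →
    JointRelWMC m₂ m₁ act μ μc (Set.range fun t : R => σ t g)

/-- Primitivity of the extension `(X,m₂,μ,G) → (X,m₁,μ,G)`. -/
def PrimitiveExtC (m₂ m₁ : MeasurableSpace X) [mXa : MeasurableSpace X] [Group G]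
    (σ : R → G → G) (act : G → X → X) (μ : Measure X)
    (μc : X → Measure X) : Prop :=
  TotallyRelWMC m₂ m₁ σ act μ μc Set.univ ∨
  RelCompactC m₂ act μ μc Set.univ ∨
  ∃ Grc Grw : Set G, IsSubmoduleSet σ Grc ∧ IsSubmoduleSet σ Grw ∧
    Grc ≠ ({1} : Set G) ∧ Grw ≠ ({1} : Set G) ∧ Grc ∩ Grw = ({1} : Set G) ∧
    (∀ g : G, ∃ a ∈ Grc, ∃ b ∈ Grw, g = a * b) ∧
    RelCompactC m₂ act μ μc Grc ∧ TotallyRelWMC m₂ m₁ σ act μ μc Grw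

/-- Nontriviality of the extension given by the pair of σ-algebras `m₂ ⊇ m₁` (μ-mod 0). -/
def NontrivialPair (m₂ m₁ : MeasurableSpace X) [mXa : MeasurableSpace X]
    (μ : Measure X) : Prop :=
  ∃ A : Set X, MeasurableSet[m₂] A ∧
    ∀ B : Set X, MeasurableSet[m₁] B → μ (symmDiff A B) ≠ 0

/-- Equality of two σ-algebras μ-mod 0. -/
def EqMod0 (m₁ m₂ : MeasurableSpace X) [mXa : MeasurableSpace X] (μ : Measure X) : Prop :=
  (∀ A : Set X, MeasurableSet[m₁] A → ∃ B, MeasurableSet[m₂] B ∧ μ (symmDiff A B) = 0) ∧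
  (∀ A : Set X, MeasurableSet[m₂] A → ∃ B, MeasurableSet[m₁] B ∧ μ (symmDiff A B) = 0)

end FE


section Lemma14Aux

open Pointwise in
theorem aux_key {G X : Type*}
    [CommGroup G] [TopologicalSpace G] [IsTopologicalGroup G]
    [LocallyCompactSpace G] [SecondCountableTopology G] [T2Space G]
    [MeasurableSpace G] [BorelSpace G]
    [mX : MeasurableSpace X] [StandardBorelSpace X]
    (μ : Measure X) [IsProbabilityMeasure μ]
    (act : G → X → X)
    (hact1 : ∀ x, act 1 x = x)
    (hactmul : ∀ g h x, act (g * h) x = act g (act h x))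
    (hactMeas : Measurable fun p : G × X => act p.1 p.2)
    (hactμ : ∀ g, MeasurePreserving (act g) μ μ)
    (φ : X → ℂ) (hφm : Measurable φ) (hφ2 : MemLp φ 2 μ)
    (Γ : Set G) (g : G) (hg : g ∈ closure Γ) (c : ℝ≥0∞) (hc : 0 < c) :
    ∃ γ ∈ Γ, eLpNorm (fun x => φ (act γ x) - φ (act g x)) 2 μ < c := by
  classical
  have hactm : ∀ h : G, Measurable (act h) := fun h =>
    hactMeas.comp (measurable_const.prodMk measurable_id)
  set E : G → ℝ≥0∞ := fun h => eLpNorm (fun x => φ (act h x) - φ x) 2 μ with hE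
  -- invariance
  have hEinv : ∀ t h : G, eLpNorm (fun x => φ (act h x) - φ (act t x)) 2 μ = E (t⁻¹ * h) := by
    intro t h
    have hmeas : AEStronglyMeasurable (fun x => φ (act (t⁻¹ * h) x) - φ x) μ :=
      ((hφm.comp (hactm _)).sub hφm).aestronglyMeasurable
    have key : (fun x => φ (act (t⁻¹ * h) x) - φ x) ∘ act t
        = fun x => φ (act h x) - φ (act t x) := by
      funext x
      simp only [Function.comp_apply]
      congr 2
      rw [← hactmul, mul_comm, mul_inv_cancel_left]
    calc eLpNorm (fun x => φ (act h x) - φ (act t x)) 2 μ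
        = eLpNorm ((fun x => φ (act (t⁻¹ * h) x) - φ x) ∘ act t) 2 μ := by rw [key]
      _ = E (t⁻¹ * h) := eLpNorm_comp_measurePreserving hmeas (hactμ t)
  -- symmetry
  have hEsymm : ∀ h : G, E h⁻¹ = E h := by
    intro h
    have h1 := hEinv h 1
    rw [mul_one] at h1
    have h2 : (fun x => φ (act 1 x) - φ (act h x)) = -(fun x => φ (act h x) - φ x) := by
      funext x; simp [hact1, neg_sub]
    rw [← h1, h2, eLpNorm_neg]
  -- triangle
  have hEtri : ∀ a b : G, E (a * b) ≤ E a + E b := by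
    intro a b
    have hsplit : (fun x => φ (act (a * b) x) - φ x)
        = (fun x => φ (act a (act b x)) - φ (act b x)) + (fun x => φ (act b x) - φ x) := by
      funext x; simp [hactmul, Pi.add_apply, sub_add_sub_cancel]
    have h1 : eLpNorm (fun x => φ (act a (act b x)) - φ (act b x)) 2 μ = E a := by
      have hmeas : AEStronglyMeasurable (fun x => φ (act a x) - φ x) μ :=
        ((hφm.comp (hactm _)).sub hφm).aestronglyMeasurable
      have h3 := eLpNorm_comp_measurePreserving (p := 2) hmeas (hactμ b)
      calc eLpNorm (fun x => φ (act a (act b x)) - φ (act b x)) 2 μ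
          = eLpNorm ((fun x => φ (act a x) - φ x) ∘ act b) 2 μ := rfl
        _ = E a := h3
    calc E (a * b)
        = eLpNorm ((fun x => φ (act a (act b x)) - φ (act b x))
            + (fun x => φ (act b x) - φ x)) 2 μ := by simp only [hE]; rw [hsplit]
      _ ≤ eLpNorm (fun x => φ (act a (act b x)) - φ (act b x)) 2 μ
            + eLpNorm (fun x => φ (act b x) - φ x) 2 μ := eLpNorm_add_le
          (((hφm.comp ((hactm a).comp (hactm b))).sub (hφm.comp (hactm b))).aestronglyMeasurable)
          (((hφm.comp (hactm b)).sub hφm).aestronglyMeasurable) one_le_two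
      _ = E a + E b := by rw [h1]
  -- measurability of E
  have hEmeas : Measurable E := by
    have hker : Measurable fun p : G × X => (‖φ (act p.1 p.2) - φ p.2‖₊ : ℝ≥0∞) ^ (2 : ℝ) :=
      (ENNReal.continuous_rpow_const.measurable).comp
        (((hφm.comp hactMeas).sub (hφm.comp measurable_snd)).nnnorm.coe_nnreal_ennreal)
    have hlint : Measurable fun h : G =>
        ∫⁻ x, (‖φ (act h x) - φ x‖₊ : ℝ≥0∞) ^ (2 : ℝ) ∂μ :=
      hker.lintegral_prod_right'
    have heq : E = fun h =>
        (∫⁻ x, (‖φ (act h x) - φ x‖₊ : ℝ≥0∞) ^ (2 : ℝ) ∂μ) ^ (1 / (2:ℝ)) := by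
      funext h
      show eLpNorm (fun x => φ (act h x) - φ x) 2 μ = _
      rw [eLpNorm_eq_lintegral_rpow_enorm_toReal two_ne_zero ENNReal.ofNat_ne_top]
      simp only [enorm_eq_nnnorm]
      norm_num
    rw [heq]
    exact (ENNReal.continuous_rpow_const.measurable).comp hlint
  -- separability: countable covering of G by L²-translates
  haveI : Fact ((1:ℝ≥0∞) ≤ 2) := ⟨one_le_two⟩
  haveI : Fact ((2:ℝ≥0∞) ≠ ∞) := ⟨ENNReal.ofNat_ne_top⟩
  haveI : SecondCountableTopology (Lp ℂ 2 μ) := inferInstance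
  set c2 : ℝ≥0∞ := c / 2 with hc2def
  have hc2 : 0 < c2 := ENNReal.half_pos hc.ne'
  have hc4 : 0 < c2 / 2 := ENNReal.half_pos hc2.ne'
  let V : G → Lp ℂ 2 μ := fun h =>
    MemLp.toLp (φ ∘ act h) (hφ2.comp_measurePreserving (hactμ h))
  have hVdist : ∀ h t : G, edist (V h) (V t) = E (t⁻¹ * h) := by
    intro h t
    rw [Lp.edist_def, ← hEinv t h]
    apply eLpNorm_congr_ae
    filter_upwards [MemLp.coeFn_toLp (hφ2.comp_measurePreserving (hactμ h)),
      MemLp.coeFn_toLp (hφ2.comp_measurePreserving (hactμ t))] with x h1 h2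
    simp only [Pi.sub_apply, h1, h2, Function.comp_apply, V]
  obtain ⟨D, hDcnt, hDdense⟩ := TopologicalSpace.exists_countable_dense (Lp ℂ 2 μ)
  set sel : Lp ℂ 2 μ → G := fun q =>
    if hq : ∃ h : G, edist (V h) q < c2 / 2 then hq.choose else 1 with hsel
  set T : Set G := sel '' D with hT
  have hTcnt : T.Countable := hDcnt.image _
  set S : Set G := {h : G | E h < c2} with hS
  have hSmeas : MeasurableSet S := hEmeas measurableSet_Iio
  have hcov : ∀ h : G, ∃ t ∈ T, E (t⁻¹ * h) < c2 := by
    intro h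
    have hmem : V h ∈ closure D := by rw [hDdense.closure_eq]; trivial
    obtain ⟨q, hqD, hq⟩ := EMetric.mem_closure_iff.1 hmem _ hc4
    have hex : ∃ h' : G, edist (V h') q < c2 / 2 := ⟨h, hq⟩
    have hselq : edist (V (sel q)) q < c2 / 2 := by
      rw [hsel]; simp only [dif_pos hex]; exact hex.choose_spec
    refine ⟨sel q, mem_image_of_mem _ hqD, ?_⟩
    calc E ((sel q)⁻¹ * h) = edist (V h) (V (sel q)) := (hVdist h (sel q)).symm
      _ ≤ edist (V h) q + edist q (V (sel q)) := edist_triangle _ _ _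
      _ < c2 / 2 + c2 / 2 := ENNReal.add_lt_add hq (by rwa [edist_comm])
      _ = c2 := ENNReal.add_halves _
  -- Haar positivity of S
  let lam : Measure G := Measure.haar
  have hSpos : 0 < lam S := by
    by_contra h0
    push_neg at h0
    have hS0 : lam S = 0 := le_antisymm h0 zero_le
    have hcup : (univ : Set G) ⊆ ⋃ t ∈ T, (fun h => t⁻¹ * h) ⁻¹' S := by
      intro h _
      obtain ⟨t, htT, ht⟩ := hcov h
      exact mem_biUnion htT ht
    have hz : lam (⋃ t ∈ T, (fun h => t⁻¹ * h) ⁻¹' S) = 0 :=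
      (measure_biUnion_null_iff hTcnt).2 fun t _ => by
        rw [measure_preimage_mul]; exact hS0
    have : lam (univ : Set G) = 0 := le_antisymm (hz ▸ measure_mono hcup) zero_le
    exact (IsOpen.measure_ne_zero lam isOpen_univ univ_nonempty) this
  -- Steinhaus
  have hnhds : S / S ∈ 𝓝 (1 : G) :=
    Measure.div_mem_nhds_one_of_haar_pos lam S hSmeas hSpos
  have hsub2 : S / S ⊆ {h : G | E h < c} := by
    rintro x hx
    obtain ⟨a, ha, b, hb, rfl⟩ := Set.mem_div.1 hx
    have : E (a / b) ≤ E a + E b := by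
      rw [div_eq_mul_inv]
      exact (hEtri a b⁻¹).trans (by rw [hEsymm])
    calc E (a / b) ≤ E a + E b := this
      _ < c2 + c2 := ENNReal.add_lt_add ha hb
      _ = c := by rw [hc2def, ENNReal.add_halves]
  -- find γ ∈ Γ near g
  have hng : (fun h => g⁻¹ * h) ⁻¹' (S / S) ∈ 𝓝 g := by
    have hcont : Continuous fun h : G => g⁻¹ * h := continuous_const.mul continuous_id
    have := hcont.continuousAt (x := g)
    apply this.preimage_mem_nhds
    rwa [inv_mul_cancel]
  obtain ⟨γ, hγmem, hγΓ⟩ := mem_closure_iff_nhds.1 hg _ hng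
  refine ⟨γ, hγΓ, ?_⟩
  rw [hEinv g γ]
  exact hsub2 hγmem

section Aux2
variable {X Y : Type*} [mX : MeasurableSpace X] [mY : MeasurableSpace Y]
  (μ : Measure X) (ν : Measure Y) (π : X → Y) (μy : Y → Measure X)

theorem aux_muy_meas (hdis : FE.Disintegration μ ν π μy) : Measurable μy :=
  Measure.measurable_of_measurable_coe _ hdis.meas

theorem aux_bind (hdis : FE.Disintegration μ ν π μy) : μ = ν.bind μy := by
  ext s hs
  rw [Measure.bind_apply hs (aux_muy_meas μ ν π μy hdis).aemeasurable]
  have := hdis.eq s hs univ MeasurableSet.univ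
  simpa using this

theorem aux_lintegral (hdis : FE.Disintegration μ ν π μy) {f : X → ℝ≥0∞} (hf : Measurable f) :
    ∫⁻ x, f x ∂μ = ∫⁻ y, ∫⁻ x, f x ∂(μy y) ∂ν := by
  rw [aux_bind μ ν π μy hdis, Measure.lintegral_bind (aux_muy_meas μ ν π μy hdis).aemeasurable hf.aemeasurable]

theorem aux_null (hdis : FE.Disintegration μ ν π μy) {N : Set X} (hN : MeasurableSet N) (h0 : μ N = 0) :
    ∀ᵐ y ∂ν, μy y N = 0 := by
  have hb : (ν.bind μy) N = ∫⁻ y, μy y N ∂ν :=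
    Measure.bind_apply hN (aux_muy_meas μ ν π μy hdis).aemeasurable
  rw [aux_bind μ ν π μy hdis] at h0
  rw [hb] at h0
  exact (lintegral_eq_zero_iff (hdis.meas N hN)).1 h0

theorem aux_cheb (hdis : FE.Disintegration μ ν π μy) {f : X → ℂ} (hf : Measurable f) {b : ℝ≥0∞} (hb0 : b ≠ 0) (hbT : b ≠ ∞) :
    ν {y | b ≤ eLpNorm f 2 (μy y)} ≤ (eLpNorm f 2 μ) ^ (2:ℝ) / b ^ (2:ℝ) := by
  have hker : Measurable fun x => (‖f x‖₊ : ℝ≥0∞) ^ (2:ℝ) :=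
    (ENNReal.continuous_rpow_const.measurable).comp hf.nnnorm.coe_nnreal_ennreal
  have hI : ∀ ρ : Measure X, eLpNorm f 2 ρ
      = (∫⁻ x, (‖f x‖₊ : ℝ≥0∞) ^ (2:ℝ) ∂ρ) ^ (1 / (2:ℝ)) := fun ρ => by
    rw [eLpNorm_eq_lintegral_rpow_enorm_toReal two_ne_zero ENNReal.ofNat_ne_top]
    simp only [enorm_eq_nnnorm]
    norm_num
  have hsq : ∀ ρ : Measure X, (eLpNorm f 2 ρ) ^ (2:ℝ)
      = ∫⁻ x, (‖f x‖₊ : ℝ≥0∞) ^ (2:ℝ) ∂ρ := fun ρ => by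
    rw [hI, ← ENNReal.rpow_mul]
    norm_num
  set Ig : Y → ℝ≥0∞ := fun y => ∫⁻ x, (‖f x‖₊ : ℝ≥0∞) ^ (2:ℝ) ∂(μy y) with hIg
  have hImeas : Measurable Ig :=
    (Measure.measurable_lintegral hker).comp (aux_muy_meas μ ν π μy hdis)
  have hsub : {y | b ≤ eLpNorm f 2 (μy y)} ⊆ {y | b ^ (2:ℝ) ≤ Ig y} := by
    intro y hy
    have : b ^ (2:ℝ) ≤ (eLpNorm f 2 (μy y)) ^ (2:ℝ) :=
      ENNReal.rpow_le_rpow hy (by norm_num)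
    rwa [hsq] at this
  have hb2 : b ^ (2:ℝ) ≠ 0 := (ENNReal.rpow_pos (pos_iff_ne_zero.2 hb0) hbT).ne'
  have hb2T : b ^ (2:ℝ) ≠ ∞ := ENNReal.rpow_ne_top_of_nonneg (by norm_num) hbT
  calc ν {y | b ≤ eLpNorm f 2 (μy y)} ≤ ν {y | b ^ (2:ℝ) ≤ Ig y} := measure_mono hsub
    _ ≤ (∫⁻ y, Ig y ∂ν) / b ^ (2:ℝ) :=
        meas_ge_le_lintegral_div hImeas.aemeasurable hb2 hb2T
    _ = (eLpNorm f 2 μ) ^ (2:ℝ) / b ^ (2:ℝ) := by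
        rw [hsq, aux_lintegral μ ν π μy hdis hker]

end Aux2

theorem aux_main {G X Y : Type*}
    [CommGroup G] [TopologicalSpace G] [IsTopologicalGroup G]
    [LocallyCompactSpace G] [SecondCountableTopology G] [T2Space G]
    [MeasurableSpace G] [BorelSpace G]
    [mX : MeasurableSpace X] [StandardBorelSpace X] [mY : MeasurableSpace Y]
    (μ : Measure X) [IsProbabilityMeasure μ] (ν : Measure Y)
    (act : G → X → X)
    (hact1 : ∀ x, act 1 x = x)
    (hactmul : ∀ g h x, act (g * h) x = act g (act h x))
    (hactMeas : Measurable fun p : G × X => act p.1 p.2)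
    (hactμ : ∀ g, MeasurePreserving (act g) μ μ)
    (π : X → Y) (μy : Y → Measure X) (hdis : FE.Disintegration μ ν π μy)
    (Γ : Set G) (g : G) (hg : g ∈ closure Γ)
    (φ : X → ℂ) (hφm : Measurable φ) (hφ2 : MemLp φ 2 μ)
    (k : ℕ) (ψ : Fin k → X → ℂ) (hψ : ∀ i, MemLp (ψ i) 2 μ)
    (a : ℝ≥0∞) (ε3 : ℝ) (hε3 : 0 < ε3) (d : ℝ≥0∞)
    (hyp : ∀ γ ∈ Γ,
      ν {y | ¬ ∃ i, eLpNorm (fun x => φ (act γ x) - ψ i x) 2 (μy y) < a} ≤ d) :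
    ν {y | ¬ ∃ i, eLpNorm (fun x => φ (act g x) - ψ i x) 2 (μy y)
        < a + ENNReal.ofReal ε3} ≤ d := by
  classical
  have hactm : ∀ h : G, Measurable (act h) := fun h =>
    hactMeas.comp (measurable_const.prodMk measurable_id)
  apply ENNReal.le_of_forall_pos_le_add
  intro η hη _
  set b : ℝ≥0∞ := ENNReal.ofReal ε3 with hbdef
  have hb0 : b ≠ 0 := by
    simp only [hbdef, ne_eq, ENNReal.ofReal_eq_zero, not_le]; exact hε3
  have hbT : b ≠ ∞ := ENNReal.ofReal_ne_top
  have hb2 : b ^ (2:ℝ) ≠ 0 := (ENNReal.rpow_pos (pos_iff_ne_zero.2 hb0) hbT).ne'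
  have hb2T : b ^ (2:ℝ) ≠ ∞ := ENNReal.rpow_ne_top_of_nonneg (by norm_num) hbT
  set c : ℝ≥0∞ := b * (η : ℝ≥0∞) ^ ((2:ℝ)⁻¹) with hcdef
  have hc : 0 < c := ENNReal.mul_pos hb0
    (ENNReal.rpow_pos (by exact_mod_cast hη) ENNReal.coe_ne_top).ne'
  obtain ⟨γ, hγΓ, hγE⟩ := aux_key μ act hact1 hactmul hactMeas hactμ φ hφm hφ2 Γ g hg c hc
  -- strongly measurable modifications of the ψ i
  have hsm : ∀ i, ∃ ψ'i : X → ℂ, StronglyMeasurable ψ'i ∧ ψ i =ᵐ[μ] ψ'i := fun i =>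
    (hψ i).aestronglyMeasurable
  choose ψ' hψ'sm hψ'ae using hsm
  set Nset : Fin k → Set X := fun i => toMeasurable μ {x | ψ i x ≠ ψ' i x} with hNset
  have hNmeas : ∀ i, MeasurableSet (Nset i) := fun i => measurableSet_toMeasurable _ _
  have hNnull : ∀ i, μ (Nset i) = 0 := fun i => by
    rw [hNset]; rw [measure_toMeasurable]; exact ae_iff.1 (hψ'ae i)
  have hfib : ∀ᵐ y ∂ν, ∀ i, μy y (Nset i) = 0 :=
    ae_all_iff.2 fun i => aux_null μ ν π μy hdis (hNmeas i) (hNnull i)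
  set NY : Set Y := {y | ¬ ∀ i, μy y (Nset i) = 0} with hNY
  have hNYnull : ν NY = 0 := ae_iff.1 hfib
  set B : Set Y := {y | ¬ ∃ i, eLpNorm (fun x => φ (act γ x) - ψ i x) 2 (μy y) < a} with hB
  set C : Set Y := {y | b ≤ eLpNorm (fun x => φ (act γ x) - φ (act g x)) 2 (μy y)} with hC
  have hfmeas : Measurable fun x => φ (act γ x) - φ (act g x) :=
    (hφm.comp (hactm γ)).sub (hφm.comp (hactm g))
  have hsubset : {y | ¬ ∃ i, eLpNorm (fun x => φ (act g x) - ψ i x) 2 (μy y) < a + b}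
      ⊆ B ∪ C ∪ NY := by
    intro y hy
    by_contra hno
    simp only [Set.mem_union, not_or] at hno
    obtain ⟨⟨hyB, hyC⟩, hyN⟩ := hno
    apply hy
    have hBex : ∃ i, eLpNorm (fun x => φ (act γ x) - ψ i x) 2 (μy y) < a := not_not.1 hyB
    obtain ⟨i, hi⟩ := hBex
    have hCi : eLpNorm (fun x => φ (act γ x) - φ (act g x)) 2 (μy y) < b := not_le.1 hyC
    have hzero : μy y (Nset i) = 0 := (not_not.1 hyN) i
    have hψae : ψ i =ᵐ[μy y] ψ' i := by
      have h1 : μy y {x | ψ i x ≠ ψ' i x} = 0 :=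
        measure_mono_null (subset_toMeasurable μ _) hzero
      exact h1
    have hAESM2 : AEStronglyMeasurable (fun x => φ (act γ x) - ψ i x) (μy y) := by
      refine ⟨fun x => φ (act γ x) - ψ' i x,
        ((hφm.comp (hactm γ)).stronglyMeasurable).sub (hψ'sm i), ?_⟩
      filter_upwards [hψae] with x hx
      rw [hx]
    have htri : eLpNorm (fun x => φ (act g x) - ψ i x) 2 (μy y)
        ≤ eLpNorm (fun x => φ (act g x) - φ (act γ x)) 2 (μy y)
          + eLpNorm (fun x => φ (act γ x) - ψ i x) 2 (μy y) := by
      have hsplit : (fun x => φ (act g x) - ψ i x)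
          = (fun x => φ (act g x) - φ (act γ x)) + fun x => φ (act γ x) - ψ i x := by
        funext x; simp [sub_add_sub_cancel]
      rw [hsplit]
      exact eLpNorm_add_le
        (((hφm.comp (hactm g)).sub (hφm.comp (hactm γ))).aestronglyMeasurable)
        hAESM2 one_le_two
    have hswap : eLpNorm (fun x => φ (act g x) - φ (act γ x)) 2 (μy y)
        = eLpNorm (fun x => φ (act γ x) - φ (act g x)) 2 (μy y) := by
      rw [show (fun x => φ (act g x) - φ (act γ x))
          = -(fun x => φ (act γ x) - φ (act g x)) by funext x; simp [neg_sub]]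
      exact eLpNorm_neg _ _ _
    refine ⟨i, lt_of_le_of_lt htri ?_⟩
    rw [hswap]
    calc eLpNorm (fun x => φ (act γ x) - φ (act g x)) 2 (μy y)
          + eLpNorm (fun x => φ (act γ x) - ψ i x) 2 (μy y)
        < b + a := ENNReal.add_lt_add hCi hi
      _ = a + b := add_comm _ _
  have hCb : ν C ≤ (η : ℝ≥0∞) := by
    have h1 := aux_cheb μ ν π μy hdis hfmeas hb0 hbT
    have h2 : (eLpNorm (fun x => φ (act γ x) - φ (act g x)) 2 μ) ^ (2:ℝ) ≤ c ^ (2:ℝ) :=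
      ENNReal.rpow_le_rpow hγE.le (by norm_num)
    have h3 : c ^ (2:ℝ) = b ^ (2:ℝ) * (η : ℝ≥0∞) := by
      rw [hcdef, ENNReal.mul_rpow_of_nonneg _ _ (by norm_num : (0:ℝ) ≤ 2),
        ← ENNReal.rpow_mul]
      norm_num
    calc ν C ≤ (eLpNorm (fun x => φ (act γ x) - φ (act g x)) 2 μ) ^ (2:ℝ) / b ^ (2:ℝ) := h1
      _ ≤ c ^ (2:ℝ) / b ^ (2:ℝ) := ENNReal.div_le_div_right h2 _
      _ = (η : ℝ≥0∞) := by
          rw [h3, mul_comm, mul_div_assoc, ENNReal.div_self hb2 hb2T, mul_one]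
  calc ν {y | ¬ ∃ i, eLpNorm (fun x => φ (act g x) - ψ i x) 2 (μy y) < a + b}
      ≤ ν (B ∪ C ∪ NY) := measure_mono hsubset
    _ ≤ ν (B ∪ C) + ν NY := measure_union_le _ _
    _ ≤ (ν B + ν C) + ν NY := add_le_add_left (measure_union_le _ _) _
    _ ≤ (d + η) + 0 := by
        refine add_le_add (add_le_add (hyp γ hγΓ) hCb) (le_of_eq hNYnull)
    _ = d + η := by rw [add_zero]

end Lemma14Aux

/-- **Lemma 1.4.** Let `G'` be an `R`-submodule of `G` and `Γ` a countable dense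
subgroup of `G'`. If for some `δ ≥ 0`, `ε > 0`, `φ ∈ L²(X,𝒳',μ)` and
`ψ₁,…,ψ_k ∈ L²(X,𝒳,μ)` one has, for every `γ ∈ Γ`,
`min_i ‖U_γ φ − ψ_i‖_{2,y} < ε` outside a set of ν-measure `≤ δ`, then for every
`g ∈ G'`, `min_i ‖U_g φ − ψ_i‖_{2,y} < 4ε` outside a set of ν-measure `≤ 4δ`.
Consequently `L²_FKap(X,𝒳',μ,G:G') = L²_FKap(X,𝒳',μ,G:Γ)`. -/
theorem lemma_1_4
    {R G X Y : Type*}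
    [Ring R] [TopologicalSpace R] [IsTopologicalAddGroup R]
    [LocallyCompactSpace R] [SecondCountableTopology R] [T2Space R]
    [CommGroup G] [TopologicalSpace G] [IsTopologicalGroup G]
    [LocallyCompactSpace G] [SecondCountableTopology G] [T2Space G]
    [MeasurableSpace G] [BorelSpace G]
    (m' : MeasurableSpace X)
    [mX : MeasurableSpace X] [StandardBorelSpace X]
    [mY : MeasurableSpace Y]
    (σ : R → G → G)
    (hσmul : ∀ (t : R) (S T : G), σ t (S * T) = σ t S * σ t T)
    (hσadd : ∀ (r t : R) (S : G), σ (r + t) S = σ r S * σ t S)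
    (hσcont : Continuous fun p : R × G => σ p.1 p.2)
    (μ : Measure X) [IsProbabilityMeasure μ]
    (ν : Measure Y) [IsProbabilityMeasure ν]
    (act : G → X → X)
    (hact1 : ∀ x, act 1 x = x)
    (hactmul : ∀ g h x, act (g * h) x = act g (act h x))
    (hactMeas : Measurable fun p : G × X => act p.1 p.2)
    (hactμ : ∀ g, MeasurePreserving (act g) μ μ)
    (actY : G → Y → Y)
    (hactY1 : ∀ y, actY 1 y = y)
    (hactYmul : ∀ g h y, actY (g * h) y = actY g (actY h y))
    (hactYMeas : Measurable fun p : G × Y => actY p.1 p.2)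
    (hactYν : ∀ g, MeasurePreserving (actY g) ν ν)
    (π : X → Y) (hπ : Measurable π) (hπmp : MeasurePreserving π μ ν)
    (hπeq : ∀ g x, π (act g x) = actY g (π x))
    (hm'le : m' ≤ mX)
    (hm'Y : MeasurableSpace.comap π mY ≤ m')
    (hm'inv : ∀ (g : G) (A : Set X), MeasurableSet[m'] A → MeasurableSet[m'] (act g ⁻¹' A))
    (μy : Y → Measure X) (hdis : FE.Disintegration μ ν π μy)
    (G' : Set G) (hG' : FE.IsSubmoduleSet σ G')
    (Γ : Set G) (hΓsub : Γ ⊆ G') (hΓ1 : (1 : G) ∈ Γ)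
    (hΓmul : ∀ a ∈ Γ, ∀ b ∈ Γ, a * b ∈ Γ) (hΓinv : ∀ a ∈ Γ, a⁻¹ ∈ Γ)
    (hΓcnt : Γ.Countable) (hΓdense : G' ⊆ closure Γ) :
    (∀ δ ε : ℝ, 0 ≤ δ → 0 < ε →
      ∀ φ : X → ℂ, FE.MemL2 m' μ φ →
      ∀ (k : ℕ) (ψ : Fin k → X → ℂ), (∀ i, MemLp (ψ i) 2 μ) →
      (∀ γ ∈ Γ,
        ν {y | ¬ ∃ i, eLpNorm (fun x => φ (act γ x) - ψ i x) 2 (μy y)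
          < ENNReal.ofReal ε} ≤ ENNReal.ofReal δ) →
      ∀ g ∈ G',
        ν {y | ¬ ∃ i, eLpNorm (fun x => φ (act g x) - ψ i x) 2 (μy y)
          < ENNReal.ofReal (4 * ε)} ≤ ENNReal.ofReal (4 * δ)) ∧
    {φ : X → ℂ | FE.MemL2 m' μ φ ∧ FE.IsFKap act μ ν μy G' φ}
      = {φ : X → ℂ | FE.MemL2 m' μ φ ∧ FE.IsFKap act μ ν μy Γ φ} := by
  constructor
  · intro δ ε hδ hε φ hφL2 k ψ hψ hyp g hgG'
    have hφm : Measurable φ := hφL2.1.mono hm'le le_rfl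
    have h := aux_main μ ν act hact1 hactmul hactMeas hactμ π μy hdis Γ g (hΓdense hgG')
      φ hφm hφL2.2 k ψ hψ (ENNReal.ofReal ε) (3*ε) (by linarith) (ENNReal.ofReal δ) hyp
    have h4 : ENNReal.ofReal ε + ENNReal.ofReal (3*ε) = ENNReal.ofReal (4*ε) := by
      rw [← ENNReal.ofReal_add hε.le (by linarith)]
      congr 1
      ring
    rw [h4] at h
    exact h.trans (ENNReal.ofReal_le_ofReal (by linarith))
  · ext φ
    simp only [Set.mem_setOf_eq]
    constructor
    · rintro ⟨h1, h2⟩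
      refine ⟨h1, fun ε hε => ?_⟩
      obtain ⟨k, ψ, hψ, hall⟩ := h2 ε hε
      exact ⟨k, ψ, hψ, fun γ hγ => hall γ (hΓsub hγ)⟩
    · rintro ⟨h1, h2⟩
      refine ⟨h1, fun ε hε => ?_⟩
      obtain ⟨k, ψ, hψ, hall⟩ := h2 (ε/4) (by linarith)
      refine ⟨k, ψ, hψ, fun g hg => ?_⟩
      have hφm : Measurable φ := h1.1.mono hm'le le_rfl
      have hyp : ∀ γ ∈ Γ, ν {y | ¬ ∃ i, eLpNorm (fun x => φ (act γ x) - ψ i x) 2 (μy y)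
          < ENNReal.ofReal (ε/4)} ≤ 0 :=
        fun γ hγ => le_of_eq (ae_iff.1 (hall γ hγ))
      have h := aux_main μ ν act hact1 hactmul hactMeas hactμ π μy hdis Γ g (hΓdense hg)
        φ hφm h1.2 k ψ hψ (ENNReal.ofReal (ε/4)) (3*(ε/4)) (by linarith) 0 hyp
      have h4 : ENNReal.ofReal (ε/4) + ENNReal.ofReal (3*(ε/4)) = ENNReal.ofReal ε := by
        rw [← ENNReal.ofReal_add (by linarith) (by linarith)]
        congr 1
        ring
      rw [h4] at h
      rw [ae_iff]
      exact le_antisymm h zero_le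
end
end

section
/- Lemma 2.1. Let Γ be an R-submodule of the lcsc R-module G and 𝕏→𝕏′=(X,𝒳′,μ,G)→𝕐 a short factors series. If φ∈L²(X,𝒳′,μ) has precompact Γ-orbit, i.e. Γ[φ]={U_gφ : g∈Γ} is precompact in (L²(X,𝒳′,μ),‖·‖₂), then φ∈L²_FKaap(X,𝒳′,μ,G:Γ). -/
open MeasureTheory Filter Set Topology
open scoped ENNReal

noncomputable section

/-- **Lemma 2.1.** If `φ ∈ L²(X,𝒳',μ)` has precompact (totally bounded) `Γ`-orbit
`{U_g φ : g ∈ Γ}` in `(L²(X,𝒳',μ), ‖·‖₂)`, then `φ` is FK ν-almost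
almost-periodic for `Γ`. -/
theorem lemma_2_1
    {R G X Y : Type*}
    [Ring R] [TopologicalSpace R] [IsTopologicalAddGroup R]
    [LocallyCompactSpace R] [SecondCountableTopology R] [T2Space R]
    [CommGroup G] [TopologicalSpace G] [IsTopologicalGroup G]
    [LocallyCompactSpace G] [SecondCountableTopology G] [T2Space G]
    [MeasurableSpace G] [BorelSpace G]
    (m' : MeasurableSpace X)
    [mX : MeasurableSpace X] [StandardBorelSpace X]
    [mY : MeasurableSpace Y]
    (σ : R → G → G)
    (hσmul : ∀ (t : R) (S T : G), σ t (S * T) = σ t S * σ t T)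
    (hσadd : ∀ (r t : R) (S : G), σ (r + t) S = σ r S * σ t S)
    (hσcont : Continuous fun p : R × G => σ p.1 p.2)
    (μ : Measure X) [IsProbabilityMeasure μ]
    (ν : Measure Y) [IsProbabilityMeasure ν]
    (act : G → X → X)
    (hact1 : ∀ x, act 1 x = x)
    (hactmul : ∀ g h x, act (g * h) x = act g (act h x))
    (hactMeas : Measurable fun p : G × X => act p.1 p.2)
    (hactμ : ∀ g, MeasurePreserving (act g) μ μ)
    (actY : G → Y → Y)
    (hactY1 : ∀ y, actY 1 y = y)
    (hactYmul : ∀ g h y, actY (g * h) y = actY g (actY h y))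
    (hactYMeas : Measurable fun p : G × Y => actY p.1 p.2)
    (hactYν : ∀ g, MeasurePreserving (actY g) ν ν)
    (π : X → Y) (hπ : Measurable π) (hπmp : MeasurePreserving π μ ν)
    (hπeq : ∀ g x, π (act g x) = actY g (π x))
    (hm'le : m' ≤ mX)
    (hm'Y : MeasurableSpace.comap π mY ≤ m')
    (hm'inv : ∀ (g : G) (A : Set X), MeasurableSet[m'] A → MeasurableSet[m'] (act g ⁻¹' A))
    (μy : Y → Measure X) (hdis : FE.Disintegration μ ν π μy)
    (Γ : Set G) (hΓ : FE.IsSubmoduleSet σ Γ)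
    (φ : X → ℂ) (hφ : FE.MemL2 m' μ φ)
    (hpc : ∀ ε : ℝ, 0 < ε → ∃ (k : ℕ) (ψ : Fin k → X → ℂ),
      (∀ j, MemLp (ψ j) 2 μ) ∧
      ∀ g ∈ Γ, ∃ j, eLpNorm (fun x => φ (act g x) - ψ j x) 2 μ < ENNReal.ofReal ε) :
    FE.IsFKaap act μ ν μy Γ φ := by
  classical
  have hμy_meas : Measurable μy :=
    Measure.measurable_of_measurable_coe _ fun B hB => hdis.meas B hB
  have hbind : μ = ν.bind μy := by
    ext B hB
    rw [Measure.bind_apply hB hμy_meas.aemeasurable]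
    simpa using hdis.eq B hB Set.univ MeasurableSet.univ
  intro δ ε hδ hε
  have hεδ : 0 < ε * Real.sqrt δ := by positivity
  obtain ⟨k, ψ, hψmem, hψ⟩ := hpc (ε * Real.sqrt δ) hεδ
  set ψ' : Fin k → X → ℂ := fun j => ((hψmem j).1.mk _) with hψ'def
  have hψ'meas : ∀ j, Measurable (ψ' j) :=
    fun j => ((hψmem j).1.stronglyMeasurable_mk).measurable
  have hψ'ae : ∀ j, ψ j =ᵐ[μ] ψ' j := fun j => (hψmem j).1.ae_eq_mk
  refine ⟨k, ψ', fun j => (hψmem j).ae_eq (hψ'ae j), ?_⟩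
  intro g hg
  obtain ⟨j, hj⟩ := hψ g hg
  set f : X → ℂ := fun x => φ (act g x) - ψ' j x with hfdef
  have hφm : Measurable φ := hφ.1.mono hm'le le_rfl
  have hactg : Measurable fun x => act g x :=
    hactMeas.comp (measurable_const.prodMk measurable_id)
  have hfmeas : Measurable f := (hφm.comp hactg).sub (hψ'meas j)
  have hjf : eLpNorm f 2 μ < ENNReal.ofReal (ε * Real.sqrt δ) := by
    have hae : f =ᵐ[μ] fun x => φ (act g x) - ψ j x :=
      Filter.EventuallyEq.sub (Filter.EventuallyEq.rfl) (hψ'ae j).symm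
    rwa [eLpNorm_congr_ae hae]
  -- the squared-norm integrand
  set q : X → ℝ≥0∞ := fun x => (‖f x‖₊ : ℝ≥0∞) ^ (2 : ℕ) with hqdef
  have hqmeas : Measurable q := hfmeas.nnnorm.coe_nnreal_ennreal.pow_const _
  set F : Y → ℝ≥0∞ := fun y => ∫⁻ x, q x ∂(μy y) with hFdef
  have hFmeas : Measurable F := (Measure.measurable_lintegral hqmeas).comp hμy_meas
  have hFint : ∫⁻ y, F y ∂ν = ∫⁻ x, q x ∂μ := by
    rw [hbind, Measure.lintegral_bind hμy_meas.aemeasurable hqmeas.aemeasurable]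
  have heLp : ∀ m : Measure X, eLpNorm f 2 m = (∫⁻ x, q x ∂m) ^ (1/2 : ℝ) := by
    intro m
    rw [eLpNorm_eq_lintegral_rpow_enorm_toReal (by norm_num) (by norm_num)]
    norm_num
    simp only [hqdef, enorm_eq_nnnorm]
  have hqint : ∫⁻ x, q x ∂μ < (ENNReal.ofReal (ε * Real.sqrt δ)) ^ (2 : ℝ) := by
    have h2 : ((∫⁻ x, q x ∂μ) ^ (1/2 : ℝ)) ^ (2 : ℝ)
        < (ENNReal.ofReal (ε * Real.sqrt δ)) ^ (2 : ℝ) :=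
      ENNReal.rpow_lt_rpow (by rw [← heLp μ]; exact hjf) (by norm_num)
    rwa [← ENNReal.rpow_mul, show (1/2 : ℝ) * 2 = 1 by norm_num, ENNReal.rpow_one] at h2
  have hc2 : (ENNReal.ofReal (ε * Real.sqrt δ)) ^ (2 : ℝ)
      = (ENNReal.ofReal ε) ^ (2 : ℝ) * ENNReal.ofReal δ := by
    rw [ENNReal.ofReal_rpow_of_pos hεδ, ENNReal.ofReal_rpow_of_pos hε,
      ← ENNReal.ofReal_mul (by positivity)]
    congr 1
    rw [Real.rpow_two, Real.rpow_two, mul_pow, Real.sq_sqrt hδ.le]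
  set S : Set Y := {y | (ENNReal.ofReal ε) ^ (2 : ℝ) ≤ F y} with hSdef
  have hcheb : (ENNReal.ofReal ε) ^ (2 : ℝ) * ν S ≤ ∫⁻ y, F y ∂ν :=
    mul_meas_ge_le_lintegral₀ hFmeas.aemeasurable _
  have hSsmall : ν S < ENNReal.ofReal δ := by
    have hlt : (ENNReal.ofReal ε) ^ (2 : ℝ) * ν S
        < (ENNReal.ofReal ε) ^ (2 : ℝ) * ENNReal.ofReal δ := by
      calc (ENNReal.ofReal ε) ^ (2 : ℝ) * ν S ≤ ∫⁻ y, F y ∂ν := hcheb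
        _ = ∫⁻ x, q x ∂μ := hFint
        _ < (ENNReal.ofReal (ε * Real.sqrt δ)) ^ (2 : ℝ) := hqint
        _ = (ENNReal.ofReal ε) ^ (2 : ℝ) * ENNReal.ofReal δ := hc2
    have hne : (ENNReal.ofReal ε) ^ (2 : ℝ) ≠ 0 := by
      simp [ENNReal.rpow_eq_zero_iff, ENNReal.ofReal_eq_zero, not_le.mpr hε]
    have hnt : (ENNReal.ofReal ε) ^ (2 : ℝ) ≠ ⊤ := by
      exact ENNReal.rpow_ne_top_of_nonneg (by norm_num) ENNReal.ofReal_ne_top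
    exact (ENNReal.mul_lt_mul_iff_right hne hnt).mp hlt
  refine lt_of_le_of_lt (measure_mono ?_) hSsmall
  intro y hy
  by_contra hyS
  apply hy
  refine ⟨j, ?_⟩
  have hFy : F y < (ENNReal.ofReal ε) ^ (2 : ℝ) := lt_of_not_ge hyS
  have : F y ^ (1/2 : ℝ) < ((ENNReal.ofReal ε) ^ (2 : ℝ)) ^ (1/2 : ℝ) :=
    ENNReal.rpow_lt_rpow hFy (by norm_num)
  rw [← ENNReal.rpow_mul, show (2 : ℝ) * (1/2) = 1 by norm_num, ENNReal.rpow_one] at this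
  rw [show (fun x => φ (act g x) - ψ' j x) = f from rfl, heLp (μy y)]
  exact this
end
end

section
/- Lemma 2.3, parts (1) and (2). Let Γ be an R-submodule of the lcsc R-module G and 𝕏→𝕏′=(X,𝒳′,μ,G)→𝕐 a short factors series. Then: (1) L²_FKaap(X,𝒳′,μ,G:Γ) is a closed linear subspace of (L²(X,𝒳′,μ),‖·‖₂) which is moreover closed under products of its bounded elements (it forms an algebra); (2) if φ∈L²(X,𝒳′,μ) is FK a.a.p. for G, then U_gφ is FK a.a.p. for G for every g∈G. -/
open MeasureTheory Filter Set Topology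
open scoped ENNReal

noncomputable section

namespace FKaux


variable {G X Y : Type*} [MeasurableSpace X] [MeasurableSpace Y]
  {μ : Measure X} {ν : Measure Y} {π : X → Y} {μy : Y → Measure X}

/-- truncation of a complex number to the ball of radius `C`. -/
def trunc (C : ℝ) (b : ℂ) : ℂ := if ‖b‖ ≤ C then b else ((C / ‖b‖ : ℝ) : ℂ) * b

lemma norm_trunc_le {C : ℝ} (hC : 0 ≤ C) (b : ℂ) : ‖trunc C b‖ ≤ C := by
  unfold trunc; split_ifs with h
  · exact h
  · push_neg at h
    have hb : (0:ℝ) < ‖b‖ := lt_of_le_of_lt hC h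
    rw [norm_mul, Complex.norm_real, Real.norm_eq_abs, abs_of_nonneg (div_nonneg hC hb.le),
      div_mul_cancel₀ _ hb.ne']

lemma norm_trunc_le_norm {C : ℝ} (hC : 0 ≤ C) (b : ℂ) : ‖trunc C b‖ ≤ ‖b‖ := by
  unfold trunc; split_ifs with h
  · exact le_refl _
  · push_neg at h
    have hb : (0:ℝ) < ‖b‖ := lt_of_le_of_lt hC h
    rw [norm_mul, Complex.norm_real, Real.norm_eq_abs, abs_of_nonneg (div_nonneg hC hb.le),
      div_mul_cancel₀ _ hb.ne']
    exact h.le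

lemma norm_sub_trunc {C : ℝ} (hC : 0 ≤ C) {a : ℂ} (ha : ‖a‖ ≤ C) (b : ℂ) :
    ‖a - trunc C b‖ ≤ 2 * ‖a - b‖ := by
  unfold trunc; split_ifs with h
  · linarith [norm_nonneg (a - b)]
  · push_neg at h
    have hb : (0:ℝ) < ‖b‖ := lt_of_le_of_lt hC h
    have htr : ‖b - ((C / ‖b‖ : ℝ) : ℂ) * b‖ = ‖b‖ - C := by
      have : b - ((C / ‖b‖ : ℝ) : ℂ) * b = ((1 - C / ‖b‖ : ℝ) : ℂ) * b := by
        push_cast; ring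
      rw [this, norm_mul, Complex.norm_real, Real.norm_eq_abs,
        abs_of_nonneg (by rw [sub_nonneg, div_le_one hb]; exact h.le)]
      rw [sub_mul, one_mul, div_mul_cancel₀ _ hb.ne']
    have h1 : ‖a - ((C / ‖b‖ : ℝ) : ℂ) * b‖ ≤ ‖a - b‖ + ‖b - ((C / ‖b‖ : ℝ) : ℂ) * b‖ := by
      calc ‖a - ((C / ‖b‖ : ℝ) : ℂ) * b‖ = ‖(a - b) + (b - ((C / ‖b‖ : ℝ) : ℂ) * b)‖ := by
            ring_nf
        _ ≤ _ := norm_add_le _ _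
    have h2 : ‖b‖ - ‖a‖ ≤ ‖a - b‖ := by
      rw [norm_sub_rev]; exact norm_sub_norm_le b a
    linarith

lemma measurable_trunc (C : ℝ) {f : X → ℂ} (hf : Measurable f) :
    Measurable fun x => trunc C (f x) := by
  unfold trunc
  exact Measurable.ite (measurableSet_le hf.norm measurable_const) hf
    ((Complex.measurable_ofReal.comp (measurable_const.div hf.norm)).mul hf)

lemma enorm_coe {C : ℝ} (hC : 0 ≤ C) : (‖(C:ℂ)‖₊ : ℝ≥0∞) = ENNReal.ofReal C := by
  rw [← enorm_eq_nnnorm, ← ofReal_norm, Complex.norm_real, Real.norm_eq_abs, abs_of_nonneg hC]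

lemma eLpNorm_const_mul' (c : ℂ) (f : X → ℂ) (ρ : Measure X) :
    eLpNorm (fun x => c * f x) 2 ρ = (‖c‖₊ : ℝ≥0∞) * eLpNorm f 2 ρ := by
  rw [show (fun x => c * f x) = c • f from by funext x; simp [Pi.smul_apply, smul_eq_mul],
    eLpNorm_const_smul, enorm_eq_nnnorm]

lemma eLpNorm_add_lt {A B : X → ℂ} {ρ : Measure X} (hA : AEStronglyMeasurable A ρ)
    (hB : AEStronglyMeasurable B ρ) {a b : ℝ≥0∞}
    (ha : eLpNorm A 2 ρ < a) (hb : eLpNorm B 2 ρ < b) :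
    eLpNorm (fun x => A x + B x) 2 ρ < a + b := by
  have h := eLpNorm_add_le hA hB (by norm_num : (1:ℝ≥0∞) ≤ 2)
  have h2 : eLpNorm (fun x => A x + B x) 2 ρ = eLpNorm (A + B) 2 ρ := rfl
  rw [h2]; exact lt_of_le_of_lt h (ENNReal.add_lt_add ha hb)

lemma eLpNorm_le_of_bound {f h : X → ℂ} {ρ : Measure X} {C : ℝ} (hC : 0 ≤ C)
    (hb : ∀ᵐ x ∂ρ, ‖f x‖ ≤ C * ‖h x‖) :
    eLpNorm f 2 ρ ≤ ENNReal.ofReal C * eLpNorm h 2 ρ := by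
  have h1 : ∀ᵐ x ∂ρ, ‖f x‖ ≤ ‖(C:ℂ) * h x‖ := hb.mono fun x hx => by
    rwa [norm_mul, Complex.norm_real, Real.norm_eq_abs, abs_of_nonneg hC]
  calc eLpNorm f 2 ρ ≤ eLpNorm (fun x => (C:ℂ) * h x) 2 ρ := eLpNorm_mono_ae h1
    _ = (‖(C:ℂ)‖₊ : ℝ≥0∞) * eLpNorm h 2 ρ := eLpNorm_const_mul' _ _ _
    _ = ENNReal.ofReal C * eLpNorm h 2 ρ := by rw [enorm_coe hC]

lemma ofReal_half_add {a : ℝ} (ha : 0 ≤ a) :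
    ENNReal.ofReal (a/2) + ENNReal.ofReal (a/2) = ENNReal.ofReal a := by
  rw [← ENNReal.ofReal_add (by positivity) (by positivity)]; norm_num

lemma bound_of_memTop {f : X → ℂ} {ρ : Measure X} (h : MemLp f ⊤ ρ) :
    ∃ C : ℝ, 0 ≤ C ∧ ∀ᵐ x ∂ρ, ‖f x‖ ≤ C := by
  refine ⟨(eLpNorm f ⊤ ρ).toReal, ENNReal.toReal_nonneg, ?_⟩
  have htop : eLpNorm f ⊤ ρ ≠ ⊤ := h.2.ne
  filter_upwards [ae_le_eLpNormEssSup (f := f) (μ := ρ)] with x hx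
  have : (‖f x‖₊ : ℝ≥0∞) ≤ eLpNorm f ⊤ ρ := by rwa [eLpNorm_exponent_top]
  have h2 := ENNReal.toReal_mono htop this
  simpa [coe_nnnorm] using h2



variable {G X Y : Type*} [MeasurableSpace X] [MeasurableSpace Y]
  {μ : Measure X} {ν : Measure Y} {π : X → Y} {μy : Y → Measure X}


lemma null_fiber (hdis : FE.Disintegration μ ν π μy) {N : Set X}
    (hN : MeasurableSet N) (h0 : μ N = 0) : ∀ᵐ y ∂ν, μy y N = 0 := by
  have h := hdis.eq N hN Set.univ MeasurableSet.univ
  rw [Set.preimage_univ, Set.inter_univ, Measure.restrict_univ] at h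
  rw [h] at h0
  filter_upwards [(lintegral_eq_zero_iff (hdis.meas N hN)).mp h0] with y hy
  simpa using hy

lemma ae_fiber (hdis : FE.Disintegration μ ν π μy) {p : X → Prop} (h : ∀ᵐ x ∂μ, p x) :
    ∀ᵐ y ∂ν, ∀ᵐ x ∂(μy y), p x := by
  have h0 : μ (toMeasurable μ {x | ¬ p x}) = 0 := by
    rw [measure_toMeasurable]; exact h
  filter_upwards [null_fiber hdis (measurableSet_toMeasurable μ _) h0] with y hy
  exact measure_mono_null (subset_toMeasurable _ _) hy

lemma lintegral_fiber (hdis : FE.Disintegration μ ν π μy) {f : X → ℝ≥0∞} (hf : Measurable f) :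
    ∫⁻ x, f x ∂μ = ∫⁻ y, ∫⁻ x, f x ∂(μy y) ∂ν := by
  have hμy : Measurable μy := Measure.measurable_of_measurable_coe _ fun s hs => hdis.meas s hs
  have hbind : μ = ν.bind μy := by
    ext s hs
    rw [Measure.bind_apply hs hμy.aemeasurable]
    have h := hdis.eq s hs Set.univ MeasurableSet.univ
    rwa [Set.preimage_univ, Set.inter_univ, Measure.restrict_univ] at h
  rw [hbind, Measure.lintegral_bind hμy.aemeasurable hf.aemeasurable]

lemma eLpNorm_two (f : X → ℂ) (ρ : Measure X) :
    eLpNorm f 2 ρ = (∫⁻ x, (‖f x‖₊ : ℝ≥0∞) ^ (2:ℝ) ∂ρ) ^ (1/2 : ℝ) := by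
  rw [eLpNorm_eq_lintegral_rpow_enorm_toReal (by norm_num) (by norm_num)]
  norm_num
  rfl

lemma fiber_norm_small (hdis : FE.Disintegration μ ν π μy) {f : X → ℂ} (hf : Measurable f)
    {ε δ : ℝ} (hε : 0 < ε) (hδ : 0 < δ)
    (hsmall : ∫⁻ x, (‖f x‖₊ : ℝ≥0∞) ^ (2:ℝ) ∂μ < ENNReal.ofReal (δ * ε^2)) :
    ν {y | ¬ eLpNorm f 2 (μy y) < ENNReal.ofReal ε} < ENNReal.ofReal δ := by
  have hμy : Measurable μy := Measure.measurable_of_measurable_coe _ fun s hs => hdis.meas s hs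
  have hg : Measurable fun x => (‖f x‖₊ : ℝ≥0∞) ^ (2:ℝ) :=
    (hf.nnnorm.coe_nnreal_ennreal).pow_const _
  have hI : Measurable fun y => ∫⁻ x, (‖f x‖₊ : ℝ≥0∞) ^ (2:ℝ) ∂(μy y) :=
    (Measure.measurable_lintegral hg).comp hμy
  set c : ℝ≥0∞ := ENNReal.ofReal ε ^ (2:ℝ) with hc
  have hc0 : c ≠ 0 := by
    simp [hc, ENNReal.rpow_eq_zero_iff, ENNReal.ofReal_pos.mpr hε, hε.le, (ENNReal.ofReal_pos.mpr hε).ne']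
  have hct : c ≠ ∞ := by
    simp [hc, ENNReal.rpow_eq_top_iff, ENNReal.ofReal_ne_top]
  have hsub : {y | ¬ eLpNorm f 2 (μy y) < ENNReal.ofReal ε}
      ⊆ {y | c ≤ ∫⁻ x, (‖f x‖₊ : ℝ≥0∞) ^ (2:ℝ) ∂(μy y)} := by
    intro y hy
    have h1 : ENNReal.ofReal ε ≤ eLpNorm f 2 (μy y) := not_lt.mp hy
    have h2 := ENNReal.rpow_le_rpow h1 (by norm_num : (0:ℝ) ≤ 2)
    rw [eLpNorm_two, ← ENNReal.rpow_mul,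
      show (1/2 : ℝ) * 2 = 1 by norm_num, ENNReal.rpow_one] at h2
    exact h2
  calc ν {y | ¬ eLpNorm f 2 (μy y) < ENNReal.ofReal ε}
      ≤ ν {y | c ≤ ∫⁻ x, (‖f x‖₊ : ℝ≥0∞) ^ (2:ℝ) ∂(μy y)} := measure_mono hsub
    _ ≤ (∫⁻ y, ∫⁻ x, (‖f x‖₊ : ℝ≥0∞) ^ (2:ℝ) ∂(μy y) ∂ν) / c :=
        meas_ge_le_lintegral_div hI.aemeasurable hc0 hct
    _ < ENNReal.ofReal δ := by
        rw [← lintegral_fiber hdis hg]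
        refine ENNReal.div_lt_of_lt_mul ?_
        have hce : ENNReal.ofReal (δ * ε^2) = ENNReal.ofReal δ * c := by
          rw [ENNReal.ofReal_mul hδ.le, hc, ENNReal.ofReal_rpow_of_pos hε]
          congr 1
          rw [← Real.rpow_natCast ε 2]; norm_num
        rw [← hce]; exact hsmall


lemma lintegral_sq_lt {f : X → ℂ} {ρ : Measure X} {r : ℝ} (hr : 0 < r)
    (h : eLpNorm f 2 ρ < ENNReal.ofReal r) :
    ∫⁻ x, (‖f x‖₊ : ℝ≥0∞) ^ (2:ℝ) ∂ρ < ENNReal.ofReal (r^2) := by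
  have h2 := ENNReal.rpow_lt_rpow h (show (0:ℝ) < 2 by norm_num)
  rw [eLpNorm_two, ← ENNReal.rpow_mul, show (1/2:ℝ)*2 = 1 by norm_num, ENNReal.rpow_one,
    ENNReal.ofReal_rpow_of_pos hr] at h2
  rw [show r ^ (2:ℕ) = r ^ (2:ℝ) from by rw [← Real.rpow_natCast r 2]; norm_num]
  exact h2

lemma sm_witness {act : G → X → X} {Γ : Set G} {φ : X → ℂ}
    (hdis : FE.Disintegration μ ν π μy) (hφ : FE.IsFKaap act μ ν μy Γ φ)
    {δ ε : ℝ} (hδ : 0 < δ) (hε : 0 < ε) :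
    ∃ (k : ℕ) (ψ : Fin k → X → ℂ), (∀ j, Measurable (ψ j)) ∧ (∀ j, MemLp (ψ j) 2 μ) ∧
      ∀ g ∈ Γ, ν {y | ¬ ∃ j, eLpNorm (fun x => φ (act g x) - ψ j x) 2 (μy y)
        < ENNReal.ofReal ε} < ENNReal.ofReal δ := by
  obtain ⟨k, ψ, hmem, hbad⟩ := hφ δ ε hδ hε
  refine ⟨k, fun j => ((hmem j).aestronglyMeasurable.mk _),
    fun j => (hmem j).aestronglyMeasurable.stronglyMeasurable_mk.measurable,
    fun j => (hmem j).ae_eq (hmem j).aestronglyMeasurable.ae_eq_mk, fun g hg => ?_⟩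
  have hae : ∀ᵐ y ∂ν, ∀ j : Fin k, ψ j =ᵐ[μy y] (hmem j).aestronglyMeasurable.mk (ψ j) := by
    rw [ae_all_iff]
    exact fun j => ae_fiber hdis (hmem j).aestronglyMeasurable.ae_eq_mk
  refine lt_of_le_of_lt (measure_mono_ae ?_) (hbad g hg)
  filter_upwards [hae] with y hy hmemy
  intro hex
  apply hmemy
  obtain ⟨j, hj⟩ := hex
  refine ⟨j, ?_⟩
  have heq : (fun x => φ (act g x) - ψ j x) =ᵐ[μy y]
      (fun x => φ (act g x) - (hmem j).aestronglyMeasurable.mk (ψ j) x) :=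
    EventuallyEq.sub (EventuallyEq.refl _ _) (hy j)
  rwa [← eLpNorm_congr_ae heq]

end FKaux


/-- **Lemma 2.3, parts (1) and (2).**
(1) `L²_FKaap(X,𝒳',μ,G:Γ)` is a closed linear subspace of `(L²(X,𝒳',μ), ‖·‖₂)`
which is moreover closed under products of its bounded elements (it forms an algebra);
(2) if `φ ∈ L²(X,𝒳',μ)` is FK a.a.p. for `G`, then `U_g φ` is FK a.a.p. for `G`
for every `g ∈ G`. -/
theorem lemma_2_3_parts_1_2
    {R G X Y : Type*}
    [Ring R] [TopologicalSpace R] [IsTopologicalAddGroup R]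
    [LocallyCompactSpace R] [SecondCountableTopology R] [T2Space R]
    [CommGroup G] [TopologicalSpace G] [IsTopologicalGroup G]
    [LocallyCompactSpace G] [SecondCountableTopology G] [T2Space G]
    [MeasurableSpace G] [BorelSpace G]
    (m' : MeasurableSpace X)
    [mX : MeasurableSpace X] [StandardBorelSpace X]
    [mY : MeasurableSpace Y]
    (σ : R → G → G)
    (hσmul : ∀ (t : R) (S T : G), σ t (S * T) = σ t S * σ t T)
    (hσadd : ∀ (r t : R) (S : G), σ (r + t) S = σ r S * σ t S)
    (hσcont : Continuous fun p : R × G => σ p.1 p.2)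
    (μ : Measure X) [IsProbabilityMeasure μ]
    (ν : Measure Y) [IsProbabilityMeasure ν]
    (act : G → X → X)
    (hact1 : ∀ x, act 1 x = x)
    (hactmul : ∀ g h x, act (g * h) x = act g (act h x))
    (hactMeas : Measurable fun p : G × X => act p.1 p.2)
    (hactμ : ∀ g, MeasurePreserving (act g) μ μ)
    (actY : G → Y → Y)
    (hactY1 : ∀ y, actY 1 y = y)
    (hactYmul : ∀ g h y, actY (g * h) y = actY g (actY h y))
    (hactYMeas : Measurable fun p : G × Y => actY p.1 p.2)
    (hactYν : ∀ g, MeasurePreserving (actY g) ν ν)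
    (π : X → Y) (hπ : Measurable π) (hπmp : MeasurePreserving π μ ν)
    (hπeq : ∀ g x, π (act g x) = actY g (π x))
    (hm'le : m' ≤ mX)
    (hm'Y : MeasurableSpace.comap π mY ≤ m')
    (hm'inv : ∀ (g : G) (A : Set X), MeasurableSet[m'] A → MeasurableSet[m'] (act g ⁻¹' A))
    (μy : Y → Measure X) (hdis : FE.Disintegration μ ν π μy)
    (Γ : Set G) (hΓ : FE.IsSubmoduleSet σ Γ) :
    ((∀ φ ψ : X → ℂ, FE.MemL2 m' μ φ → FE.MemL2 m' μ ψ →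
        FE.IsFKaap act μ ν μy Γ φ → FE.IsFKaap act μ ν μy Γ ψ →
        FE.IsFKaap act μ ν μy Γ (fun x => φ x + ψ x)) ∧
      (∀ (c : ℂ) (φ : X → ℂ), FE.MemL2 m' μ φ → FE.IsFKaap act μ ν μy Γ φ →
        FE.IsFKaap act μ ν μy Γ (fun x => c * φ x)) ∧
      (∀ (φ : X → ℂ) (φn : ℕ → X → ℂ), FE.MemL2 m' μ φ →
        (∀ n, FE.MemL2 m' μ (φn n) ∧ FE.IsFKaap act μ ν μy Γ (φn n)) →
        Tendsto (fun n => eLpNorm (fun x => φn n x - φ x) 2 μ) atTop (nhds 0) →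
        FE.IsFKaap act μ ν μy Γ φ) ∧
      (∀ φ ψ : X → ℂ, FE.MemL2 m' μ φ → FE.MemL2 m' μ ψ →
        MemLp φ ⊤ μ → MemLp ψ ⊤ μ →
        FE.IsFKaap act μ ν μy Γ φ → FE.IsFKaap act μ ν μy Γ ψ →
        FE.IsFKaap act μ ν μy Γ (fun x => φ x * ψ x))) ∧
    (∀ φ : X → ℂ, FE.MemL2 m' μ φ → FE.IsFKaap act μ ν μy Set.univ φ →
      ∀ g : G, FE.IsFKaap act μ ν μy Set.univ (fun x => φ (act g x))) := by
  classical
  have hactM : ∀ g : G, Measurable (act g) := fun g => hactMeas.comp measurable_prodMk_left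
  refine ⟨⟨?_, ?_, ?_, ?_⟩, ?_⟩
  · -- addition
    intro φ ψf hφ2 hψ2 hφ hψ δ ε hδ hε
    obtain ⟨k, ψ, hψmeas, hψmem, hψbad⟩ := FKaux.sm_witness hdis hφ (half_pos hδ) (half_pos hε)
    obtain ⟨l, χ, hχmeas, hχmem, hχbad⟩ := FKaux.sm_witness hdis hψ (half_pos hδ) (half_pos hε)
    refine ⟨k * l, fun i x => ψ (finProdFinEquiv.symm i).1 x + χ (finProdFinEquiv.symm i).2 x,
      fun i => (hψmem _).add (hχmem _), fun g hg => ?_⟩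
    have hφg : Measurable fun x => φ (act g x) := (hφ2.1.mono hm'le le_rfl).comp (hactM g)
    have hψg : Measurable fun x => ψf (act g x) := (hψ2.1.mono hm'le le_rfl).comp (hactM g)
    have hsub : {y | ¬ ∃ i : Fin (k * l), eLpNorm (fun x => (fun x => φ x + ψf x) (act g x) -
          (ψ (finProdFinEquiv.symm i).1 x + χ (finProdFinEquiv.symm i).2 x)) 2 (μy y)
          < ENNReal.ofReal ε}
        ⊆ {y | ¬ ∃ j, eLpNorm (fun x => φ (act g x) - ψ j x) 2 (μy y) < ENNReal.ofReal (ε/2)}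
        ∪ {y | ¬ ∃ j, eLpNorm (fun x => ψf (act g x) - χ j x) 2 (μy y)
            < ENNReal.ofReal (ε/2)} := by
      intro y hy
      by_contra hy2
      rw [Set.mem_union, not_or] at hy2
      obtain ⟨h1, h2⟩ := hy2
      simp only [Set.mem_setOf_eq, not_not] at h1 h2
      obtain ⟨j, hj⟩ := h1
      obtain ⟨m, hm⟩ := h2
      apply hy
      refine ⟨finProdFinEquiv (j, m), ?_⟩
      simp only [Equiv.symm_apply_apply]
      have hfun : (fun x => (fun x => φ x + ψf x) (act g x) - (ψ j x + χ m x))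
          = fun x => (φ (act g x) - ψ j x) + (ψf (act g x) - χ m x) := by
        funext x; simp only []; ring
      rw [hfun, ← FKaux.ofReal_half_add hε.le]
      exact FKaux.eLpNorm_add_lt ((hφg.sub (hψmeas j)).aestronglyMeasurable)
        ((hψg.sub (hχmeas m)).aestronglyMeasurable) hj hm
    exact lt_of_le_of_lt (le_trans (measure_mono hsub) (measure_union_le _ _))
      (by rw [← FKaux.ofReal_half_add hδ.le]
          exact ENNReal.add_lt_add (hψbad g hg) (hχbad g hg))
  · -- scalar multiplication
    intro c φ hφ2 hφ δ ε hδ hε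
    have hden : (0:ℝ) < ‖c‖ + 1 := by positivity
    have hε' : 0 < ε / (‖c‖ + 1) := div_pos hε hden
    obtain ⟨k, ψ, hψmeas, hψmem, hψbad⟩ := FKaux.sm_witness hdis hφ hδ hε'
    refine ⟨k, fun j x => c * ψ j x, fun j => (hψmem j).const_mul c, fun g hg => ?_⟩
    refine lt_of_le_of_lt (measure_mono fun y hy => ?_) (hψbad g hg)
    simp only [Set.mem_setOf_eq] at hy ⊢
    intro hex
    apply hy
    obtain ⟨j, hj⟩ := hex
    refine ⟨j, ?_⟩
    have hfun : (fun x => (fun x => c * φ x) (act g x) - c * ψ j x)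
        = fun x => c * (φ (act g x) - ψ j x) := by funext x; simp only []; ring
    rw [hfun, FKaux.eLpNorm_const_mul']
    calc (‖c‖₊ : ℝ≥0∞) * eLpNorm (fun x => φ (act g x) - ψ j x) 2 (μy y)
        ≤ (‖c‖₊ : ℝ≥0∞) * ENNReal.ofReal (ε / (‖c‖ + 1)) := mul_le_mul_right hj.le _
      _ = ENNReal.ofReal (‖c‖ * (ε / (‖c‖ + 1))) := by
          rw [ENNReal.ofReal_mul (norm_nonneg c), ofReal_norm, enorm_eq_nnnorm]
      _ < ENNReal.ofReal ε := by
          rw [ENNReal.ofReal_lt_ofReal_iff hε]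
          calc ‖c‖ * (ε / (‖c‖ + 1)) = (‖c‖ / (‖c‖ + 1)) * ε := by ring
            _ < 1 * ε := mul_lt_mul_of_pos_right (by rw [div_lt_one hden]; linarith) hε
            _ = ε := one_mul ε
  · -- closedness under L² limits
    intro φ φn hφ2 hn hlim δ ε hδ hε
    have hre : (0:ℝ) < (δ/2) * (ε/2)^2 := by positivity
    have hrpos : 0 < Real.sqrt ((δ/2) * (ε/2)^2) := Real.sqrt_pos.mpr hre
    obtain ⟨n, hn2⟩ := (hlim.eventually_lt_const (show (0:ℝ≥0∞)
      < ENNReal.ofReal (Real.sqrt ((δ/2) * (ε/2)^2)) from ENNReal.ofReal_pos.mpr hrpos)).exists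
    have hfm : Measurable fun x => φ x - φn n x :=
      (hφ2.1.mono hm'le le_rfl).sub ((hn n).1.1.mono hm'le le_rfl)
    have hneg : eLpNorm (fun x => φ x - φn n x) 2 μ
        < ENNReal.ofReal (Real.sqrt ((δ/2) * (ε/2)^2)) := by
      have hee : (fun x => φ x - φn n x) = -(fun x => φn n x - φ x) := by funext x; simp
      rw [hee, eLpNorm_neg]; exact hn2
    have hsq : ∫⁻ x, (‖φ x - φn n x‖₊ : ℝ≥0∞) ^ (2:ℝ) ∂μ
        < ENNReal.ofReal ((δ/2) * (ε/2)^2) := by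
      have := FKaux.lintegral_sq_lt hrpos hneg
      rwa [Real.sq_sqrt hre.le] at this
    obtain ⟨k, ψ, hψmeas, hψmem, hψbad⟩ :=
      FKaux.sm_witness hdis (hn n).2 (half_pos hδ) (half_pos hε)
    refine ⟨k, ψ, hψmem, fun g hg => ?_⟩
    have hφng : Measurable fun x => φn n (act g x) := ((hn n).1.1.mono hm'le le_rfl).comp (hactM g)
    have hcomp : Measurable fun x => φ (act g x) - φn n (act g x) :=
      ((hφ2.1.mono hm'le le_rfl).comp (hactM g)).sub hφng
    have hint : ∫⁻ x, (‖φ (act g x) - φn n (act g x)‖₊ : ℝ≥0∞) ^ (2:ℝ) ∂μ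
        = ∫⁻ x, (‖φ x - φn n x‖₊ : ℝ≥0∞) ^ (2:ℝ) ∂μ :=
      (hactμ g).lintegral_comp ((hfm.nnnorm.coe_nnreal_ennreal).pow_const _)
    have hfib := FKaux.fiber_norm_small (f := fun x => φ (act g x) - φn n (act g x)) hdis hcomp
      (half_pos hε) (half_pos hδ) (by rw [hint]; exact hsq)
    have hsub : {y | ¬ ∃ j, eLpNorm (fun x => φ (act g x) - ψ j x) 2 (μy y) < ENNReal.ofReal ε}
        ⊆ {y | ¬ ∃ j, eLpNorm (fun x => φn n (act g x) - ψ j x) 2 (μy y)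
            < ENNReal.ofReal (ε/2)}
        ∪ {y | ¬ eLpNorm (fun x => φ (act g x) - φn n (act g x)) 2 (μy y)
            < ENNReal.ofReal (ε/2)} := by
      intro y hy
      by_contra hy2
      rw [Set.mem_union, not_or] at hy2
      obtain ⟨h1, h2⟩ := hy2
      simp only [Set.mem_setOf_eq, not_not] at h1 h2
      obtain ⟨j, hj⟩ := h1
      apply hy
      refine ⟨j, ?_⟩
      have hfun : (fun x => φ (act g x) - ψ j x)
          = fun x => (φn n (act g x) - ψ j x) + (φ (act g x) - φn n (act g x)) := by
        funext x; ring
      rw [hfun, ← FKaux.ofReal_half_add hε.le]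
      exact FKaux.eLpNorm_add_lt ((hφng.sub (hψmeas j)).aestronglyMeasurable)
        hcomp.aestronglyMeasurable hj h2
    exact lt_of_le_of_lt (le_trans (measure_mono hsub) (measure_union_le _ _))
      (by rw [← FKaux.ofReal_half_add hδ.le]
          exact ENNReal.add_lt_add (hψbad g hg) hfib)
  · -- products of bounded elements
    intro φ ψf hφ2 hψ2 hφtop hψtop hφ hψ δ ε hδ hε
    obtain ⟨Cφ, hCφ0, hCφ⟩ := FKaux.bound_of_memTop hφtop
    obtain ⟨Cψ, hCψ0, hCψ⟩ := FKaux.bound_of_memTop hψtop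
    set C := max Cφ Cψ with hC
    have hC0 : 0 ≤ C := le_trans hCφ0 (le_max_left _ _)
    have hden : (0:ℝ) < 3*C + 3 := by positivity
    have hε' : 0 < ε / (3*C + 3) := div_pos hε hden
    obtain ⟨k, ψ, hψmeas, hψmem, hψbad⟩ := FKaux.sm_witness hdis hφ (half_pos hδ) hε'
    obtain ⟨l, χ, hχmeas, hχmem, hχbad⟩ := FKaux.sm_witness hdis hψ (half_pos hδ) hε'
    refine ⟨k * l, fun i x => ψ (finProdFinEquiv.symm i).1 x *
        FKaux.trunc C (χ (finProdFinEquiv.symm i).2 x), fun i => ?_, fun g hg => ?_⟩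
    · refine MemLp.of_le ((hψmem (finProdFinEquiv.symm i).1).const_mul (C:ℂ)) ((hψmeas _).mul
        (FKaux.measurable_trunc C (hχmeas _))).aestronglyMeasurable (ae_of_all _ fun x => ?_)
      rw [norm_mul, norm_mul, Complex.norm_real, Real.norm_eq_abs, abs_of_nonneg hC0, mul_comm C]
      exact mul_le_mul_of_nonneg_left (FKaux.norm_trunc_le hC0 _) (norm_nonneg _)
    · have hφg : Measurable fun x => φ (act g x) := (hφ2.1.mono hm'le le_rfl).comp (hactM g)
      have hψg : Measurable fun x => ψf (act g x) := (hψ2.1.mono hm'le le_rfl).comp (hactM g)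
      have hφb : ∀ᵐ x ∂μ, ‖φ (act g x)‖ ≤ C :=
        (hactμ g).quasiMeasurePreserving.tendsto_ae.eventually
          (hCφ.mono fun x hx => hx.trans (le_max_left _ _))
      have hψb : ∀ᵐ x ∂μ, ‖ψf (act g x)‖ ≤ C :=
        (hactμ g).quasiMeasurePreserving.tendsto_ae.eventually
          (hCψ.mono fun x hx => hx.trans (le_max_right _ _))
      have hfib := FKaux.ae_fiber hdis (hφb.and hψb)
      have hsub : {y | ¬ ∃ i : Fin (k * l), eLpNorm (fun x => (fun x => φ x * ψf x) (act g x) -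
            (ψ (finProdFinEquiv.symm i).1 x *
              FKaux.trunc C (χ (finProdFinEquiv.symm i).2 x))) 2 (μy y) < ENNReal.ofReal ε}
          ≤ᵐ[ν] ({y | ¬ ∃ j, eLpNorm (fun x => φ (act g x) - ψ j x) 2 (μy y)
              < ENNReal.ofReal (ε / (3*C + 3))}
          ∪ {y | ¬ ∃ j, eLpNorm (fun x => ψf (act g x) - χ j x) 2 (μy y)
              < ENNReal.ofReal (ε / (3*C + 3))} : Set Y) := by
        filter_upwards [hfib] with y hy hmem
        by_contra hy2
        obtain ⟨h1, h2⟩ := not_or.mp hy2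
        simp only [Set.mem_setOf_eq, not_not] at h1 h2
        obtain ⟨j, hj⟩ := h1
        obtain ⟨m, hm⟩ := h2
        apply hmem
        refine ⟨finProdFinEquiv (j, m), ?_⟩
        simp only [Equiv.symm_apply_apply]
        have hfun : (fun x => (fun x => φ x * ψf x) (act g x) -
              ψ j x * FKaux.trunc C (χ m x))
            = fun x => (φ (act g x) * (ψf (act g x) - FKaux.trunc C (χ m x)))
                + (FKaux.trunc C (χ m x) * (φ (act g x) - ψ j x)) := by
          funext x; simp only []; ring
        rw [hfun]
        have hA : eLpNorm (fun x => φ (act g x) * (ψf (act g x) - FKaux.trunc C (χ m x)))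
              2 (μy y)
            ≤ ENNReal.ofReal (2*C) * eLpNorm (fun x => ψf (act g x) - χ m x) 2 (μy y) := by
          refine FKaux.eLpNorm_le_of_bound (by positivity) ?_
          filter_upwards [hy] with x hx
          rw [norm_mul]
          calc ‖φ (act g x)‖ * ‖ψf (act g x) - FKaux.trunc C (χ m x)‖
              ≤ C * (2 * ‖ψf (act g x) - χ m x‖) :=
                mul_le_mul hx.1 (FKaux.norm_sub_trunc hC0 hx.2 _) (norm_nonneg _) hC0
            _ = 2*C * ‖ψf (act g x) - χ m x‖ := by ring
        have hB : eLpNorm (fun x => FKaux.trunc C (χ m x) * (φ (act g x) - ψ j x)) 2 (μy y)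
            ≤ ENNReal.ofReal C * eLpNorm (fun x => φ (act g x) - ψ j x) 2 (μy y) := by
          refine FKaux.eLpNorm_le_of_bound hC0 (ae_of_all _ fun x => ?_)
          rw [norm_mul]
          exact mul_le_mul_of_nonneg_right (FKaux.norm_trunc_le hC0 _) (norm_nonneg _)
        calc eLpNorm (fun x => (φ (act g x) * (ψf (act g x) - FKaux.trunc C (χ m x)))
              + (FKaux.trunc C (χ m x) * (φ (act g x) - ψ j x))) 2 (μy y)
            ≤ eLpNorm (fun x => φ (act g x) * (ψf (act g x) - FKaux.trunc C (χ m x))) 2 (μy y)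
              + eLpNorm (fun x => FKaux.trunc C (χ m x) * (φ (act g x) - ψ j x)) 2 (μy y) :=
              eLpNorm_add_le
                ((hφg.mul (hψg.sub (FKaux.measurable_trunc C (hχmeas m)))).aestronglyMeasurable)
                (((FKaux.measurable_trunc C (hχmeas m)).mul
                  (hφg.sub (hψmeas j))).aestronglyMeasurable) (by norm_num : (1:ℝ≥0∞) ≤ 2)
          _ ≤ ENNReal.ofReal (2*C) * ENNReal.ofReal (ε / (3*C + 3))
              + ENNReal.ofReal C * ENNReal.ofReal (ε / (3*C + 3)) :=
              add_le_add (hA.trans (mul_le_mul_right hm.le _))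
                (hB.trans (mul_le_mul_right hj.le _))
          _ = ENNReal.ofReal (2*C * (ε / (3*C + 3)) + C * (ε / (3*C + 3))) := by
              rw [← ENNReal.ofReal_mul (by positivity), ← ENNReal.ofReal_mul hC0,
                ← ENNReal.ofReal_add (by positivity) (by positivity)]
          _ < ENNReal.ofReal ε := by
              rw [ENNReal.ofReal_lt_ofReal_iff hε]
              calc 2*C * (ε / (3*C + 3)) + C * (ε / (3*C + 3))
                  = ((3*C) / (3*C + 3)) * ε := by ring
                _ < 1 * ε := mul_lt_mul_of_pos_right (by rw [div_lt_one hden]; linarith) hε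
                _ = ε := one_mul ε
      calc ν _ ≤ ν _ := measure_mono_ae hsub
        _ ≤ ν _ + ν _ := measure_union_le _ _
        _ < ENNReal.ofReal (δ/2) + ENNReal.ofReal (δ/2) :=
            ENNReal.add_lt_add (hψbad g hg) (hχbad g hg)
        _ = ENNReal.ofReal δ := FKaux.ofReal_half_add hδ.le
  · -- translation invariance
    intro φ hφ2 hφ g δ ε hδ hε
    obtain ⟨k, ψ, hmem, hbad⟩ := hφ δ ε hδ hε
    refine ⟨k, ψ, hmem, fun h _ => ?_⟩
    have hb := hbad (g * h) (Set.mem_univ _)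
    simp only [hactmul] at hb
    exact hb
end
end

section
/- Lemma 2.8. Let K be a compact subset of the lcsc R-module G, let Γ be an R-submodule of G, and let 𝕏→𝕏′=(X,𝒳′,μ,G)→𝕐 be a short factors series. If L²_FKaap(X,𝒳′,μ,G:Γ)=L²(X,𝒳′,μ), then every φ∈L²(X,𝒳′,μ) is FK ν-almost almost-periodic for the set K∘Γ={f∘g : f∈K, g∈Γ}. -/
open MeasureTheory Filter Set Topology
open scoped ENNReal

noncomputable section

open Pointwise

private lemma sq_eLpNorm_two' {α : Type*} [MeasurableSpace α] (ρ : Measure α) (f : α → ℂ) :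
    eLpNorm f 2 ρ ^ (2:ℕ) = ∫⁻ x, (‖f x‖₊ : ℝ≥0∞) ^ (2:ℕ) ∂ρ := by
  rw [eLpNorm_eq_lintegral_rpow_enorm_toReal two_ne_zero ENNReal.ofNat_ne_top]
  have h2 : (2 : ℝ≥0∞).toReal = (2:ℝ) := by simp
  rw [h2, ← ENNReal.rpow_natCast _ 2, ← ENNReal.rpow_mul]
  norm_num
  exact lintegral_congr fun x => by rw [enorm_eq_nnnorm]

private lemma ennreal_le_iff_sq' {a b : ℝ≥0∞} : a ≤ b ↔ a ^ (2:ℕ) ≤ b ^ (2:ℕ) := by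
  constructor
  · intro h; exact pow_le_pow_left₀ zero_le h 2
  · intro h; by_contra hc
    exact absurd h (not_le.2 (ENNReal.pow_lt_pow_left two_ne_zero (not_le.1 hc)))

/-- **Lemma 2.8.** Let `K` be a compact subset of the lcsc `R`-module `G` and `Γ`
an `R`-submodule of `G`. If `L²_FKaap(X,𝒳',μ,G:Γ) = L²(X,𝒳',μ)`, then every
`φ ∈ L²(X,𝒳',μ)` is FK ν-almost almost-periodic for `K ∘ Γ = {f ∘ g : f ∈ K, g ∈ Γ}`. -/
theorem lemma_2_8
    {R G X Y : Type*}
    [Ring R] [TopologicalSpace R] [IsTopologicalAddGroup R]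
    [LocallyCompactSpace R] [SecondCountableTopology R] [T2Space R]
    [CommGroup G] [TopologicalSpace G] [IsTopologicalGroup G]
    [LocallyCompactSpace G] [SecondCountableTopology G] [T2Space G]
    [MeasurableSpace G] [BorelSpace G]
    (m' : MeasurableSpace X)
    [mX : MeasurableSpace X] [StandardBorelSpace X]
    [mY : MeasurableSpace Y]
    (σ : R → G → G)
    (hσmul : ∀ (t : R) (S T : G), σ t (S * T) = σ t S * σ t T)
    (hσadd : ∀ (r t : R) (S : G), σ (r + t) S = σ r S * σ t S)
    (hσcont : Continuous fun p : R × G => σ p.1 p.2)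
    (μ : Measure X) [IsProbabilityMeasure μ]
    (ν : Measure Y) [IsProbabilityMeasure ν]
    (act : G → X → X)
    (hact1 : ∀ x, act 1 x = x)
    (hactmul : ∀ g h x, act (g * h) x = act g (act h x))
    (hactMeas : Measurable fun p : G × X => act p.1 p.2)
    (hactμ : ∀ g, MeasurePreserving (act g) μ μ)
    (actY : G → Y → Y)
    (hactY1 : ∀ y, actY 1 y = y)
    (hactYmul : ∀ g h y, actY (g * h) y = actY g (actY h y))
    (hactYMeas : Measurable fun p : G × Y => actY p.1 p.2)
    (hactYν : ∀ g, MeasurePreserving (actY g) ν ν)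
    (π : X → Y) (hπ : Measurable π) (hπmp : MeasurePreserving π μ ν)
    (hπeq : ∀ g x, π (act g x) = actY g (π x))
    (hm'le : m' ≤ mX)
    (hm'Y : MeasurableSpace.comap π mY ≤ m')
    (hm'inv : ∀ (g : G) (A : Set X), MeasurableSet[m'] A → MeasurableSet[m'] (act g ⁻¹' A))
    (μy : Y → Measure X) (hdis : FE.Disintegration μ ν π μy)
    (K : Set G) (hK : IsCompact K)
    (Γ : Set G) (hΓ : FE.IsSubmoduleSet σ Γ)
    (hall : ∀ φ : X → ℂ, FE.MemL2 m' μ φ → FE.IsFKaap act μ ν μy Γ φ) :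
    ∀ φ : X → ℂ, FE.MemL2 m' μ φ →
      FE.IsFKaap act μ ν μy (Set.image2 (· * ·) K Γ) φ := by
  classical
  intro φ hφ
  obtain ⟨hφ1, hφ2⟩ := hφ
  -- basic measurability facts
  have hactg : ∀ g : G, Measurable (act g) := fun g =>
    hactMeas.comp measurable_prodMk_left
  have hφm : Measurable φ := hφ1.mono hm'le le_rfl
  have hΦm : ∀ f : G, Measurable fun x => φ (act f x) := fun f => hφm.comp (hactg f)
  have hΦmem : ∀ f : G, MemLp (fun x => φ (act f x)) 2 μ := fun f =>
    hφ2.comp_measurePreserving (hactμ f)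
  have hμym : Measurable μy :=
    Measure.measurable_of_measurable_coe _ fun s hs => hdis.meas s hs
  have hbind : μ = ν.bind μy := by
    ext B hB
    rw [Measure.bind_apply hB hμym.aemeasurable]
    have h := hdis.eq B hB Set.univ MeasurableSet.univ
    simpa using h
  have htot : ∀ F : X → ℝ≥0∞, Measurable F →
      ∫⁻ x, F x ∂μ = ∫⁻ y, ∫⁻ x, F x ∂(μy y) ∂ν := by
    intro F hF
    conv_lhs => rw [hbind]
    exact Measure.lintegral_bind hμym.aemeasurable hF.aemeasurable
  have hfiber : ∀ N : Set X, MeasurableSet N → μ N = 0 → ∀ᵐ y ∂ν, μy y N = 0 := by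
    intro N hNm hN0
    have h := hdis.eq N hNm Set.univ MeasurableSet.univ
    simp only [Set.preimage_univ, Set.inter_univ, Measure.restrict_univ] at h
    have h0 : ∫⁻ y, μy y N ∂ν = 0 := by rw [← h, hN0]
    have h1 := (lintegral_eq_zero_iff (hdis.meas N hNm)).1 h0
    filter_upwards [h1] with y hy using hy
  -- Chebyshev/Markov on fibers
  have hMarkov : ∀ θ : X → ℂ, Measurable θ → ∀ c : ℝ≥0∞, c ≠ 0 → c ≠ ∞ →
      ν {y | c ≤ eLpNorm θ 2 (μy y)} ≤ eLpNorm θ 2 μ ^ (2:ℕ) / c ^ (2:ℕ) := by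
    intro θ hθ c hc0 hctop
    have hsq : Measurable fun x => (‖θ x‖₊ : ℝ≥0∞) ^ (2:ℕ) :=
      (hθ.nnnorm.coe_nnreal_ennreal).pow_const _
    have hA : Measurable fun y => ∫⁻ x, (‖θ x‖₊ : ℝ≥0∞) ^ (2:ℕ) ∂(μy y) :=
      (Measure.measurable_lintegral hsq).comp hμym
    have hset : {y | c ≤ eLpNorm θ 2 (μy y)}
        = {y | c ^ (2:ℕ) ≤ ∫⁻ x, (‖θ x‖₊ : ℝ≥0∞) ^ (2:ℕ) ∂(μy y)} := by
      ext y
      simp only [Set.mem_setOf_eq]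
      rw [ennreal_le_iff_sq', sq_eLpNorm_two']
    rw [hset]
    calc ν {y | c ^ (2:ℕ) ≤ ∫⁻ x, (‖θ x‖₊ : ℝ≥0∞) ^ (2:ℕ) ∂(μy y)}
        ≤ (∫⁻ y, ∫⁻ x, (‖θ x‖₊ : ℝ≥0∞) ^ (2:ℕ) ∂(μy y) ∂ν) / c ^ (2:ℕ) :=
          meas_ge_le_lintegral_div hA.aemeasurable (pow_ne_zero _ hc0)
            (ENNReal.pow_ne_top hctop)
      _ = eLpNorm θ 2 μ ^ (2:ℕ) / c ^ (2:ℕ) := by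
          rw [← htot _ hsq, ← sq_eLpNorm_two']
  -- eLpNorm helper facts
  have hsymm : ∀ (ρ : Measure X) (a b : X → ℂ),
      eLpNorm (fun x => a x - b x) 2 ρ = eLpNorm (fun x => b x - a x) 2 ρ := by
    intro ρ a b
    rw [show (fun x => a x - b x) = -fun x => b x - a x by funext x; simp, eLpNorm_neg]
  have htri : ∀ (ρ : Measure X) (a b c : X → ℂ), AEStronglyMeasurable a ρ →
      AEStronglyMeasurable b ρ → AEStronglyMeasurable c ρ →
      eLpNorm (fun x => a x - c x) 2 ρ ≤
        eLpNorm (fun x => a x - b x) 2 ρ + eLpNorm (fun x => b x - c x) 2 ρ := by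
    intro ρ a b c ha hb hc
    have hd : (fun x => a x - c x) = (fun x => a x - b x) + fun x => b x - c x := by
      funext x; simp only [Pi.add_apply]; ring
    rw [hd]
    exact eLpNorm_add_le (ha.sub hb) (hb.sub hc) one_le_two
  -- translation invariance of the "Koopman distance"
  have htrans : ∀ f f' h : G,
      eLpNorm (fun x => φ (act (f * h) x) - φ (act (f' * h) x)) 2 μ
        = eLpNorm (fun x => φ (act f x) - φ (act f' x)) 2 μ := by
    intro f f' h
    have hd : (fun x => φ (act (f * h) x) - φ (act (f' * h) x))
        = (fun x => φ (act f x) - φ (act f' x)) ∘ act h := by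
      funext x; simp [Function.comp, hactmul]
    rw [hd]; exact eLpNorm_comp_measurePreserving
      (((hΦm f).sub (hΦm f')).aestronglyMeasurable) (hactμ h)
  -- the finite net on K, via separability of L² and the Steinhaus theorem
  have hnet : ∀ c : ℝ, 0 < c → ∃ t : Finset G, ∀ f ∈ K, ∃ f' ∈ t,
      eLpNorm (fun x => φ (act f x) - φ (act f' x)) 2 μ ≤ ENNReal.ofReal c := by
    intro c hc
    have hc6 : (0:ℝ) < c / 6 := by positivity
    haveI : Fact ((2:ℝ≥0∞) ≠ ∞) := ⟨ENNReal.ofNat_ne_top⟩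
    obtain ⟨S, hScount, hSdense⟩ := TopologicalSpace.exists_countable_dense (Lp ℂ 2 μ)
    obtain ⟨e, hSe⟩ := hScount.exists_eq_range hSdense.nonempty
    set ψ : ℕ → X → ℂ := fun n => (Lp.aestronglyMeasurable (e n)).mk _ with hψdef
    have hψmeas : ∀ n, Measurable (ψ n) := fun n =>
      (Lp.aestronglyMeasurable (e n)).stronglyMeasurable_mk.measurable
    have hψae : ∀ n, (e n : X → ℂ) =ᵐ[μ] ψ n := fun n =>
      (Lp.aestronglyMeasurable (e n)).ae_eq_mk
    set A : ℕ → Set G := fun n => {f : G |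
      ∫⁻ x, (‖φ (act f x) - ψ n x‖₊ : ℝ≥0∞) ^ (2:ℕ) ∂μ ≤ ENNReal.ofReal (c/6) ^ (2:ℕ)}
      with hAdef
    have hAint : ∀ n (f : G), f ∈ A n ↔
        eLpNorm (fun x => φ (act f x) - ψ n x) 2 μ ≤ ENNReal.ofReal (c/6) := by
      intro n f
      rw [hAdef]
      simp only [Set.mem_setOf_eq]
      rw [ennreal_le_iff_sq' (a := eLpNorm (fun x => φ (act f x) - ψ n x) 2 μ)
        (b := ENNReal.ofReal (c/6)), sq_eLpNorm_two']
    have hAmeas : ∀ n, MeasurableSet (A n) := by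
      intro n
      have hm2 : Measurable fun p : G × X =>
          (‖φ (act p.1 p.2) - ψ n p.2‖₊ : ℝ≥0∞) ^ (2:ℕ) :=
        (((hφm.comp hactMeas).sub
          ((hψmeas n).comp measurable_snd)).nnnorm.coe_nnreal_ennreal).pow_const _
      have hL : Measurable fun f : G =>
          ∫⁻ x, (‖φ (act f x) - ψ n x‖₊ : ℝ≥0∞) ^ (2:ℕ) ∂μ :=
        Measurable.lintegral_prod_right
          (f := fun f x => (‖φ (act f x) - ψ n x‖₊ : ℝ≥0∞) ^ (2:ℕ)) hm2
      exact hL measurableSet_Iic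
    have hcover : ∀ f : G, ∃ n, f ∈ A n := by
      intro f
      have hmem := hΦmem f
      obtain ⟨g0, hg0S, hg0d⟩ :=
        Metric.mem_closure_iff.1 (hSdense (hmem.toLp _)) (c/6) hc6
      rw [hSe] at hg0S
      obtain ⟨n, rfl⟩ := hg0S
      refine ⟨n, (hAint n f).2 ?_⟩
      have he1 : (fun x => φ (act f x) - ψ n x) =ᵐ[μ]
          fun x => (hmem.toLp _ : Lp ℂ 2 μ) x - (e n : X → ℂ) x := by
        filter_upwards [hmem.coeFn_toLp, hψae n] with x h1 h2
        rw [h1, h2]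
      rw [eLpNorm_congr_ae he1]
      have he2 : eLpNorm (fun x => (hmem.toLp _ : Lp ℂ 2 μ) x - (e n : X → ℂ) x) 2 μ
          = edist (hmem.toLp _) (e n) := by
        rw [Lp.edist_def]
        rfl
      rw [he2, edist_dist]
      exact ENNReal.ofReal_le_ofReal hg0d.le
    set mG : Measure G := MeasureTheory.Measure.haar with hmGdef
    have hGpos : ∃ n, mG (A n) ≠ 0 := by
      by_contra hcon
      push_neg at hcon
      have h0 : mG (⋃ n, A n) = 0 := measure_iUnion_null hcon
      have huniv : (⋃ n, A n) = Set.univ :=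
        Set.eq_univ_of_forall fun f => Set.mem_iUnion.2 (hcover f)
      rw [huniv] at h0
      exact (isOpen_univ.measure_ne_zero mG Set.univ_nonempty) h0
    obtain ⟨n, hn⟩ := hGpos
    have hV : A n / A n ∈ nhds (1:G) :=
      MeasureTheory.Measure.div_mem_nhds_one_of_haar_pos mG (A n) (hAmeas n)
        (pos_iff_ne_zero.2 hn)
    have hVsmall : ∀ v ∈ A n / A n,
        eLpNorm (fun x => φ (act v x) - φ x) 2 μ ≤ ENNReal.ofReal c := by
      intro v hv
      obtain ⟨a, ha, b, hb, rfl⟩ := hv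
      have hab : eLpNorm (fun x => φ (act a x) - φ (act b x)) 2 μ
          ≤ ENNReal.ofReal (c/6) + ENNReal.ofReal (c/6) :=
        calc eLpNorm (fun x => φ (act a x) - φ (act b x)) 2 μ
            ≤ eLpNorm (fun x => φ (act a x) - ψ n x) 2 μ
              + eLpNorm (fun x => ψ n x - φ (act b x)) 2 μ :=
              htri μ _ _ _ (hΦm a).aestronglyMeasurable (hψmeas n).aestronglyMeasurable
                (hΦm b).aestronglyMeasurable
          _ ≤ _ := add_le_add ((hAint n a).1 ha)
                (le_of_eq_of_le (hsymm μ _ _) ((hAint n b).1 hb))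
      have htr := htrans (a / b) 1 b
      rw [show a / b * b = a by rw [div_eq_mul_inv, inv_mul_cancel_right], one_mul] at htr
      have hΦ1 : (fun x => φ (act (a / b) x) - φ (act (1:G) x))
          = fun x => φ (act (a / b) x) - φ x := by
        funext x; rw [hact1]
      rw [hΦ1] at htr
      rw [← htr]
      refine hab.trans ?_
      rw [← ENNReal.ofReal_add hc6.le hc6.le]
      exact ENNReal.ofReal_le_ofReal (by linarith)
    obtain ⟨t, ht⟩ := hK.elim_nhds_subcover (fun f => (fun v => f * v) '' (A n / A n))
      (fun f _ => by
        have h1 : Filter.map (fun v => f * v) (nhds (1:G)) = nhds f := by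
          simpa using (Homeomorph.mulLeft f).map_nhds_eq (1:G)
        exact h1 ▸ Filter.image_mem_map hV)
    refine ⟨t, fun f hf => ?_⟩
    obtain ⟨f', hf't, hmem⟩ := Set.mem_iUnion₂.1 (ht.2 hf)
    obtain ⟨v, hvV, rfl⟩ := hmem
    have htr := htrans v 1 f'
    rw [one_mul, mul_comm v f'] at htr
    refine ⟨f', hf't, ?_⟩
    rw [htr]
    have hΦ1 : (fun x => φ (act v x) - φ (act (1:G) x)) = fun x => φ (act v x) - φ x := by
      funext x; rw [hact1]
    rw [hΦ1]
    exact hVsmall v hvV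
  -- main assembly
  intro δ ε hδ hε
  have hε2 : (0:ℝ) < ε / 2 := by positivity
  have hδ4 : (0:ℝ) < δ / 4 := by positivity
  set c : ℝ := (ε/2) * Real.sqrt (δ/4) with hcdef
  have hsqpos : (0:ℝ) < Real.sqrt (δ/4) := Real.sqrt_pos.2 hδ4
  have hcpos : 0 < c := by positivity
  obtain ⟨t, hts⟩ := hnet c hcpos
  have hφf' : ∀ f' : G, FE.MemL2 m' μ fun x => φ (act f' x) := fun f' =>
    ⟨hφ1.comp (fun A hA => hm'inv f' A hA), hΦmem f'⟩
  choose k Ψ hΨmem hΨbad using fun i : {f // f ∈ t} =>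
    hall (fun x => φ (act i.1 x)) (hφf' i.1) (δ/2) (ε/2) (by positivity) hε2
  have hASM : ∀ i j, AEStronglyMeasurable (Ψ i j) μ := fun i j =>
    (hΨmem i j).aestronglyMeasurable
  set Ψm : ∀ i : {f // f ∈ t}, Fin (k i) → X → ℂ := fun i j => (hASM i j).mk _ with hΨmdef
  have hΨmMeas : ∀ i j, Measurable (Ψm i j) := fun i j =>
    (hASM i j).stronglyMeasurable_mk.measurable
  have hΨae : ∀ i j, Ψ i j =ᵐ[μ] Ψm i j := fun i j => (hASM i j).ae_eq_mk
  have hNex : ∀ i j, ∃ N : Set X, {x | Ψ i j x ≠ Ψm i j x} ⊆ N ∧ MeasurableSet N ∧ μ N = 0 :=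
    fun i j => exists_measurable_superset_of_null (ae_iff.1 (hΨae i j))
  choose N hNsub hNmeas hN0 using hNex
  have haeN : ∀ᵐ y ∂ν, ∀ i j, μy y (N i j) = 0 :=
    ae_all_iff.2 fun i => ae_all_iff.2 fun j => hfiber _ (hNmeas i j) (hN0 i j)
  let I := Σ i : {f // f ∈ t}, Fin (k i)
  let eqv : I ≃ Fin (Fintype.card I) := Fintype.equivFin I
  refine ⟨Fintype.card I, fun j => Ψm (eqv.symm j).1 (eqv.symm j).2,
    fun j => (hΨmem _ _).ae_eq (hΨae _ _), ?_⟩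
  intro g hg
  rw [Set.mem_image2] at hg
  obtain ⟨f, hfK, h, hhΓ, rfl⟩ := hg
  obtain ⟨f', hf't, hDff'⟩ := hts f hfK
  set i : {f // f ∈ t} := ⟨f', hf't⟩ with hidef
  set θ : X → ℂ := fun x => φ (act f x) - φ (act f' x) with hθdef
  have hθmeas : Measurable θ := (hΦm f).sub (hΦm f')
  have hθc : eLpNorm θ 2 μ ≤ ENNReal.ofReal c := hDff'
  have hθh : eLpNorm (θ ∘ act h) 2 μ = eLpNorm θ 2 μ :=
    eLpNorm_comp_measurePreserving hθmeas.aestronglyMeasurable (hactμ h)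
  set B1 : Set Y := {y | ¬ ∃ j, eLpNorm (fun x => φ (act (i:G) (act h x)) - Ψ i j x) 2 (μy y)
      < ENNReal.ofReal (ε/2)} with hB1def
  have hB1 : ν B1 < ENNReal.ofReal (δ/2) := hΨbad i h hhΓ
  set B2 : Set Y := {y | ENNReal.ofReal (ε/2) ≤ eLpNorm (θ ∘ act h) 2 (μy y)} with hB2def
  have hB2 : ν B2 ≤ ENNReal.ofReal (δ/4) := by
    have hne0 : ENNReal.ofReal (ε/2) ≠ 0 := by
      simp only [ne_eq, ENNReal.ofReal_eq_zero, not_le]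
      exact hε2
    have hm := hMarkov (θ ∘ act h) (hθmeas.comp (hactg h)) (ENNReal.ofReal (ε/2))
      hne0 ENNReal.ofReal_ne_top
    refine hm.trans ?_
    rw [hθh]
    have hnum : eLpNorm θ 2 μ ^ (2:ℕ)
        ≤ ENNReal.ofReal (δ/4) * ENNReal.ofReal (ε/2) ^ (2:ℕ) := by
      calc eLpNorm θ 2 μ ^ (2:ℕ) ≤ ENNReal.ofReal c ^ (2:ℕ) :=
            pow_le_pow_left₀ zero_le hθc 2
        _ = ENNReal.ofReal (δ/4) * ENNReal.ofReal (ε/2) ^ (2:ℕ) := by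
            rw [← ENNReal.ofReal_pow hcpos.le, ← ENNReal.ofReal_pow hε2.le,
              ← ENNReal.ofReal_mul hδ4.le]
            congr 1
            rw [hcdef, mul_pow, Real.sq_sqrt hδ4.le]
            ring
    exact ENNReal.div_le_of_le_mul hnum
  set B3 : Set Y := {y | ¬ ∀ (i' : {f // f ∈ t}) (j' : Fin (k i')), μy y (N i' j') = 0}
    with hB3def
  have hB3 : ν B3 = 0 := ae_iff.1 haeN
  have hsubset : {y | ¬ ∃ j, eLpNorm (fun x => φ (act (f * h) x)
        - Ψm (eqv.symm j).1 (eqv.symm j).2 x) 2 (μy y) < ENNReal.ofReal ε}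
      ⊆ B1 ∪ B2 ∪ B3 := by
    intro y hy
    by_contra hy'
    simp only [Set.mem_union, not_or] at hy'
    obtain ⟨⟨hy1, hy2⟩, hy3⟩ := hy'
    apply hy
    rw [hB1def, Set.mem_setOf_eq, not_not] at hy1
    obtain ⟨j, hj⟩ := hy1
    rw [hB3def, Set.mem_setOf_eq, not_not] at hy3
    have hNy : μy y (N i j) = 0 := hy3 i j
    have hΨaey : Ψ i j =ᵐ[μy y] Ψm i j :=
      ae_iff.2 (measure_mono_null (hNsub i j) hNy)
    have hcongr : eLpNorm (fun x => φ (act (i:G) (act h x)) - Ψ i j x) 2 (μy y)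
        = eLpNorm (fun x => φ (act (i:G) (act h x)) - Ψm i j x) 2 (μy y) := by
      refine eLpNorm_congr_ae ?_
      filter_upwards [hΨaey] with x hx
      rw [hx]
    refine ⟨eqv ⟨i, j⟩, ?_⟩
    have key : ∀ s : I, s = ⟨i, j⟩ →
        eLpNorm (fun x => φ (act (f * h) x) - Ψm s.1 s.2 x) 2 (μy y) < ENNReal.ofReal ε := by
      intro s hs
      subst hs
      show eLpNorm (fun x => φ (act (f * h) x) - Ψm i j x) 2 (μy y) < ENNReal.ofReal ε
      have hnotB2 : eLpNorm (θ ∘ act h) 2 (μy y) < ENNReal.ofReal (ε/2) := by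
        rw [hB2def, Set.mem_setOf_eq] at hy2
        exact not_le.1 hy2
      have hkey : (fun x => φ (act (f * h) x) - φ (act (i:G) (act h x))) = θ ∘ act h := by
        funext x
        simp only [hθdef, Function.comp_apply]
        rw [hactmul]
      calc eLpNorm (fun x => φ (act (f * h) x) - Ψm i j x) 2 (μy y)
          ≤ eLpNorm (fun x => φ (act (f * h) x) - φ (act (i:G) (act h x))) 2 (μy y)
            + eLpNorm (fun x => φ (act (i:G) (act h x)) - Ψm i j x) 2 (μy y) :=
            htri (μy y) _ _ _ (hΦm (f*h)).aestronglyMeasurable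
              ((hΦm (i:G)).comp (hactg h)).aestronglyMeasurable
              (hΨmMeas i j).aestronglyMeasurable
        _ < ENNReal.ofReal (ε/2) + ENNReal.ofReal (ε/2) := by
            refine ENNReal.add_lt_add ?_ ?_
            · rw [hkey]; exact hnotB2
            · rw [← hcongr]; exact hj
        _ = ENNReal.ofReal ε := by
            rw [← ENNReal.ofReal_add hε2.le hε2.le]
            norm_num
    exact key _ (Equiv.symm_apply_apply eqv ⟨i, j⟩)
  refine lt_of_le_of_lt (measure_mono hsubset) ?_
  calc ν (B1 ∪ B2 ∪ B3) ≤ ν (B1 ∪ B2) + ν B3 := measure_union_le _ _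
    _ = ν (B1 ∪ B2) := by rw [hB3, add_zero]
    _ ≤ ν B1 + ν B2 := measure_union_le _ _
    _ ≤ ν B1 + ENNReal.ofReal (δ/4) := add_le_add le_rfl hB2
    _ < ENNReal.ofReal (δ/2) + ENNReal.ofReal (δ/4) :=
        ENNReal.add_lt_add_right ENNReal.ofReal_ne_top hB1
    _ ≤ ENNReal.ofReal δ := by
        rw [← ENNReal.ofReal_add (by positivity) hδ4.le]
        exact ENNReal.ofReal_le_ofReal (by linarith)
end
end
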